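/- arXiv:2303.12897 — 7 statements merged into one kernel-verified Lean document; each statement's English description precedes it below -/
import Mathlib

section
/- The embedding operators between generalized Jacobi bases are banded, with bandwidth one more than the degree of the corresponding weight factor. Precisely: (i) ∫_{−1}^{1} w^{(a+1,b,c)}(z) P_n^{(a,b,c)}(z) P_m^{(a+1,b,c)}(z) dz = 0 unless n−1 ≤ m ≤ n; (ii) ∫_{−1}^{1} w^{(a,b+1,c)}(z) P_n^{(a,b,c)}(z) P_m^{(a,b+1,c)}(z) dz = 0 unless n−1 ≤ m ≤ n; (iii) for each index i, writing dᵢ = deg pᵢ and c+eᵢ for the exponent vector with cᵢ replaced by cᵢ+1: ∫_{−1}^{1} w^{(a,b,c+eᵢ)}(z) P_n^{(a,b,c)}(z) P_m^{(a,b,c+eᵢ)}(z) dz = 0 unless n−dᵢ ≤ m ≤ n. -/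
open MeasureTheory Polynomial

/-- The generalized Jacobi weight `(1-z)^a (1+z)^b p₁(z)^{c₁} ⋯ p_N(z)^{c_N}`. -/
noncomputable def gjWeight (a b : ℝ) {N : ℕ} (c : Fin N → ℝ) (p : Fin N → Polynomial ℝ)
    (z : ℝ) : ℝ :=
  (1 - z) ^ a * (1 + z) ^ b * ∏ i, (p i).eval z ^ (c i)

/-- `P` is the sequence of orthonormal polynomials for the weight `w` on `(-1,1)`:
`deg P_k = k`, positive leading coefficients, and `⟨P_j, P_k⟩ = δ_{jk}`. -/
def IsONPolys (w : ℝ → ℝ) (P : ℕ → Polynomial ℝ) : Prop :=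
  (∀ k, (P k).degree = k) ∧ (∀ k, 0 < (P k).leadingCoeff) ∧
    ∀ j k, (∫ z in Set.Ioo (-1 : ℝ) 1, w z * (P j).eval z * (P k).eval z)
      = if j = k then (1 : ℝ) else 0

lemma span_of_degree_lt (P : ℕ → Polynomial ℝ)
    (hdeg : ∀ k, (P k).degree = k) (n : ℕ) :
    ∀ q : Polynomial ℝ, q.degree < n → q ∈ Submodule.span ℝ (P '' Set.Iio n) := by
  have key : ∀ d : ℕ, ∀ q : Polynomial ℝ, q.natDegree < d → q.degree < n →
      q ∈ Submodule.span ℝ (P '' Set.Iio n) := by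
    intro d
    induction d with
    | zero => intro q h; omega
    | succ d ih =>
      intro q hqd hqn
      by_cases h0 : q = 0
      · simp [h0]
      · set k := q.natDegree with hk
        have hkn : k < n := by
          rwa [← Polynomial.natDegree_lt_iff_degree_lt h0] at hqn
        have hPk0 : P k ≠ 0 := by
          intro h
          have := hdeg k
          rw [h, Polynomial.degree_zero] at this
          exact absurd this (by simp)
        have hlc : (P k).leadingCoeff ≠ 0 := Polynomial.leadingCoeff_ne_zero.2 hPk0
        set s : ℝ := q.leadingCoeff / (P k).leadingCoeff with hs
        have hs0 : s ≠ 0 := div_ne_zero (Polynomial.leadingCoeff_ne_zero.2 h0) hlc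
        have hmemk : P k ∈ Submodule.span ℝ (P '' Set.Iio n) :=
          Submodule.subset_span ⟨k, hkn, rfl⟩
        have hdegCP : (Polynomial.C s * P k).degree = q.degree := by
          rw [Polynomial.degree_C_mul hs0, hdeg k, Polynomial.degree_eq_natDegree h0]
        have hlcCP : (Polynomial.C s * P k).leadingCoeff = q.leadingCoeff := by
          rw [Polynomial.leadingCoeff_mul, Polynomial.leadingCoeff_C, hs]
          field_simp
        have hsub : (q - Polynomial.C s * P k).degree < q.degree :=
          Polynomial.degree_sub_lt hdegCP.symm h0 hlcCP.symm
        have hmem1 : (q - Polynomial.C s * P k) ∈ Submodule.span ℝ (P '' Set.Iio n) := by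
          by_cases hr0 : q - Polynomial.C s * P k = 0
          · simp [hr0]
          · apply ih
            · have : (q - Polynomial.C s * P k).natDegree < q.natDegree :=
                Polynomial.natDegree_lt_natDegree hr0 hsub
              omega
            · exact lt_trans hsub hqn
        have : q = (q - Polynomial.C s * P k) + Polynomial.C s * P k := by ring
        rw [this]
        exact Submodule.add_mem _ hmem1 (by
          rw [show Polynomial.C s * P k = s • P k by rw [Polynomial.smul_eq_C_mul]]
          exact Submodule.smul_mem _ s hmemk)
  intro q hq
  exact key (q.natDegree + 1) q (Nat.lt_succ_self _) hq

lemma sq_integrable (w : ℝ → ℝ) (P : ℕ → Polynomial ℝ) (hON : IsONPolys w P) (j : ℕ) :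
    IntegrableOn (fun z => w z * (P j).eval z * (P j).eval z) (Set.Ioo (-1:ℝ) 1) := by
  by_contra h
  have h1 := hON.2.2 j j
  rw [if_pos rfl, MeasureTheory.integral_undef h] at h1
  exact one_ne_zero h1.symm

lemma pair_integrable (w : ℝ → ℝ)
    (hw_meas : AEStronglyMeasurable w (volume.restrict (Set.Ioo (-1:ℝ) 1)))
    (hw_nonneg : ∀ z ∈ Set.Ioo (-1:ℝ) 1, 0 ≤ w z)
    (P : ℕ → Polynomial ℝ) (hON : IsONPolys w P) (j k : ℕ) :
    IntegrableOn (fun z => w z * (P j).eval z * (P k).eval z) (Set.Ioo (-1:ℝ) 1) := by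
  have hj := sq_integrable w P hON j
  have hk := sq_integrable w P hON k
  have hg : IntegrableOn (fun z => (1/2 : ℝ) * (w z * (P j).eval z * (P j).eval z)
      + (1/2 : ℝ) * (w z * (P k).eval z * (P k).eval z)) (Set.Ioo (-1:ℝ) 1) :=
    (hj.const_mul _).add (hk.const_mul _)
  refine hg.mono' ?_ ?_
  · exact (hw_meas.mul (Polynomial.continuous (P j)).aestronglyMeasurable).mul
      ((Polynomial.continuous (P k)).aestronglyMeasurable)
  · filter_upwards [ae_restrict_mem measurableSet_Ioo] with z hz
    have h0 := hw_nonneg z hz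
    rw [Real.norm_eq_abs]
    rcases abs_cases (w z * (P j).eval z * (P k).eval z) with ⟨h, _⟩ | ⟨h, _⟩ <;> rw [h] <;>
      nlinarith [mul_nonneg h0 (sq_nonneg ((P j).eval z - (P k).eval z)),
        mul_nonneg h0 (sq_nonneg ((P j).eval z + (P k).eval z))]

lemma ortho_lower (w : ℝ → ℝ) (P : ℕ → Polynomial ℝ) (hON : IsONPolys w P)
    (hint : ∀ j k, IntegrableOn (fun z => w z * (P j).eval z * (P k).eval z)
      (Set.Ioo (-1:ℝ) 1))
    (n : ℕ) (q : Polynomial ℝ) (hq : q.degree < n) :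
    (∫ z in Set.Ioo (-1:ℝ) 1, w z * (P n).eval z * q.eval z) = 0 := by
  have hmem := span_of_degree_lt P hON.1 n q hq
  have main : ∀ r ∈ Submodule.span ℝ (P '' Set.Iio n),
      IntegrableOn (fun z => w z * (P n).eval z * r.eval z) (Set.Ioo (-1:ℝ) 1) ∧
      (∫ z in Set.Ioo (-1:ℝ) 1, w z * (P n).eval z * r.eval z) = 0 := by
    intro r hr
    induction hr using Submodule.span_induction with
    | mem x hx =>
      obtain ⟨k, hk, rfl⟩ := hx
      refine ⟨hint n k, ?_⟩
      rw [hON.2.2 n k, if_neg]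
      exact fun h => absurd hk (by simp [← h])
    | zero => constructor <;> simp
    | add x y hx hy ihx ihy =>
      constructor
      · have := ihx.1.add ihy.1
        exact IntegrableOn.congr_fun this (fun z _ => by
          simp only [Pi.add_apply, Polynomial.eval_add]; ring) measurableSet_Ioo
      · have heq : (∫ z in Set.Ioo (-1:ℝ) 1, w z * (P n).eval z * (x + y).eval z)
            = ∫ z in Set.Ioo (-1:ℝ) 1, (w z * (P n).eval z * x.eval z
              + w z * (P n).eval z * y.eval z) := by
          simp [mul_add]
        rw [heq, integral_add ihx.1 ihy.1, ihx.2, ihy.2, add_zero]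
    | smul t x hx ihx =>
      constructor
      · have := ihx.1.const_mul t
        exact IntegrableOn.congr_fun this (fun z _ => by
          simp only [Polynomial.eval_smul, smul_eq_mul]; ring) measurableSet_Ioo
      · have heq : (∫ z in Set.Ioo (-1:ℝ) 1, w z * (P n).eval z * (t • x).eval z)
            = ∫ z in Set.Ioo (-1:ℝ) 1, t * (w z * (P n).eval z * x.eval z) := by
          apply setIntegral_congr_fun measurableSet_Ioo
          intro z _
          simp [Polynomial.eval_smul, smul_eq_mul]; ring
        rw [heq, integral_const_mul, ihx.2, mul_zero]
  exact (main q hmem).2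

lemma banded (w w' : ℝ → ℝ) (q : Polynomial ℝ) (d : ℕ) (hqd : q.degree ≤ d)
    (happ : ∀ z ∈ Set.Ioo (-1:ℝ) 1, w' z = q.eval z * w z)
    (P Q : ℕ → Polynomial ℝ) (hP : IsONPolys w P) (hQ : IsONPolys w' Q)
    (hintP : ∀ j k, IntegrableOn (fun z => w z * (P j).eval z * (P k).eval z)
      (Set.Ioo (-1:ℝ) 1))
    (hintQ : ∀ j k, IntegrableOn (fun z => w' z * (Q j).eval z * (Q k).eval z)
      (Set.Ioo (-1:ℝ) 1))
    (n m : ℕ) (h : ¬(n ≤ m + d ∧ m ≤ n)) :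
    (∫ z in Set.Ioo (-1:ℝ) 1, w' z * (P n).eval z * (Q m).eval z) = 0 := by
  by_cases hmn : m ≤ n
  · -- then n > m + d
    have hlt : m + d < n := by
      by_contra hc
      exact h ⟨by omega, hmn⟩
    have hdeg : (q * Q m).degree < (n : ℕ) := by
      calc (q * Q m).degree ≤ q.degree + (Q m).degree := Polynomial.degree_mul_le _ _
        _ ≤ (d : WithBot ℕ) + (m : WithBot ℕ) := add_le_add hqd (le_of_eq (hQ.1 m))
        _ = ((d + m : ℕ) : WithBot ℕ) := by norm_cast
        _ < (n : WithBot ℕ) := by exact_mod_cast (by omega : d + m < n)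
    have h0 := ortho_lower w P hP hintP n (q * Q m) hdeg
    rw [← h0]
    apply setIntegral_congr_fun measurableSet_Ioo
    intro z hz
    simp only [Polynomial.eval_mul, happ z hz]
    ring
  · -- n < m
    have hltn : n < m := by omega
    have hdeg : (P n).degree < (m : ℕ) := by
      rw [hP.1 n]; exact_mod_cast hltn
    have h0 := ortho_lower w' Q hQ hintQ m (P n) hdeg
    rw [← h0]
    apply setIntegral_congr_fun measurableSet_Ioo
    intro z _
    ring

lemma gj_contOn (a b : ℝ) {N : ℕ} (c : Fin N → ℝ) (p : Fin N → Polynomial ℝ)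
    (hp : ∀ i, ∀ z ∈ Set.Icc (-1 : ℝ) 1, 0 < (p i).eval z) :
    ContinuousOn (gjWeight a b c p) (Set.Ioo (-1:ℝ) 1) := by
  unfold gjWeight
  apply ContinuousOn.mul
  apply ContinuousOn.mul
  · refine (continuous_const.sub continuous_id).continuousOn.rpow_const fun z hz => Or.inl ?_
    have := hz.2; simp only [Set.mem_Ioo] at hz
    have : (0:ℝ) < 1 - z := by linarith [hz.2]
    exact ne_of_gt this
  · refine (continuous_const.add continuous_id).continuousOn.rpow_const fun z hz => Or.inl ?_
    simp only [Set.mem_Ioo] at hz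
    have : (0:ℝ) < 1 + z := by linarith [hz.1]
    exact ne_of_gt this
  · refine continuousOn_finset_prod _ fun i _ => ?_
    exact ((p i).continuous.continuousOn).rpow_const fun z hz =>
      Or.inl (ne_of_gt (hp i z (Set.Ioo_subset_Icc_self hz)))

lemma gj_nonneg (a b : ℝ) {N : ℕ} (c : Fin N → ℝ) (p : Fin N → Polynomial ℝ)
    (hp : ∀ i, ∀ z ∈ Set.Icc (-1 : ℝ) 1, 0 < (p i).eval z) :
    ∀ z ∈ Set.Ioo (-1:ℝ) 1, 0 ≤ gjWeight a b c p z := by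
  intro z hz
  simp only [Set.mem_Ioo] at hz
  unfold gjWeight
  apply mul_nonneg
  apply mul_nonneg
  · exact Real.rpow_nonneg (by linarith [hz.2]) _
  · exact Real.rpow_nonneg (by linarith [hz.1]) _
  · exact Finset.prod_nonneg fun i _ =>
      Real.rpow_nonneg (le_of_lt (hp i z (Set.Ioo_subset_Icc_self (Set.mem_Ioo.2 hz)))) _

/-- The embedding operators between generalized Jacobi bases are banded with bandwidth one
more than the degree of the corresponding weight factor:  incrementing `a`, `b`, or `cᵢ`
gives matrix entries vanishing unless `n-1 ≤ m ≤ n`, resp. `n - deg pᵢ ≤ m ≤ n`. -/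
theorem statement7 (a b : ℝ) (ha : -1 < a) (hb : -1 < b) (N : ℕ) (c : Fin N → ℝ)
    (p : Fin N → Polynomial ℝ) (hp : ∀ i, ∀ z ∈ Set.Icc (-1 : ℝ) 1, 0 < (p i).eval z)
    (P Pa Pb : ℕ → Polynomial ℝ) (Pc : Fin N → ℕ → Polynomial ℝ)
    (hP : IsONPolys (gjWeight a b c p) P)
    (hPa : IsONPolys (gjWeight (a + 1) b c p) Pa)
    (hPb : IsONPolys (gjWeight a (b + 1) c p) Pb)
    (hPc : ∀ i : Fin N,
      IsONPolys (gjWeight a b (Function.update c i (c i + 1)) p) (Pc i)) :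
    (∀ n m : ℕ, ¬(n ≤ m + 1 ∧ m ≤ n) →
      (∫ z in Set.Ioo (-1 : ℝ) 1,
        gjWeight (a + 1) b c p z * (P n).eval z * (Pa m).eval z) = 0) ∧
    (∀ n m : ℕ, ¬(n ≤ m + 1 ∧ m ≤ n) →
      (∫ z in Set.Ioo (-1 : ℝ) 1,
        gjWeight a (b + 1) c p z * (P n).eval z * (Pb m).eval z) = 0) ∧
    (∀ i : Fin N, ∀ n m : ℕ, ¬(n ≤ m + (p i).natDegree ∧ m ≤ n) →
      (∫ z in Set.Ioo (-1 : ℝ) 1,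
        gjWeight a b (Function.update c i (c i + 1)) p z
          * (P n).eval z * (Pc i m).eval z) = 0) := by
  -- integrability families
  have hint : ∀ (a' b' : ℝ) (c' : Fin N → ℝ) (Q : ℕ → Polynomial ℝ),
      IsONPolys (gjWeight a' b' c' p) Q → ∀ j k,
      IntegrableOn (fun z => gjWeight a' b' c' p z * (Q j).eval z * (Q k).eval z)
        (Set.Ioo (-1:ℝ) 1) := by
    intro a' b' c' Q hQ j k
    exact pair_integrable _
      ((gj_contOn a' b' c' p hp).aestronglyMeasurable measurableSet_Ioo)
      (gj_nonneg a' b' c' p hp) Q hQ j k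
  refine ⟨?_, ?_, ?_⟩
  · intro n m h
    refine banded (gjWeight a b c p) (gjWeight (a+1) b c p) (1 - Polynomial.X) 1
      ?_ ?_ P Pa hP hPa (hint a b c P hP) (hint (a+1) b c Pa hPa) n m h
    · calc (1 - Polynomial.X : Polynomial ℝ).degree
          ≤ max (1 : Polynomial ℝ).degree (Polynomial.X : Polynomial ℝ).degree :=
            Polynomial.degree_sub_le _ _
        _ ≤ 1 := by rw [Polynomial.degree_one, Polynomial.degree_X]; simp
    · intro z hz
      simp only [Set.mem_Ioo] at hz
      have h1 : (1 : ℝ) - z ≠ 0 := ne_of_gt (by linarith [hz.2])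
      unfold gjWeight
      rw [Real.rpow_add_one h1]
      simp only [Polynomial.eval_sub, Polynomial.eval_one, Polynomial.eval_X]
      ring
  · intro n m h
    refine banded (gjWeight a b c p) (gjWeight a (b+1) c p) (1 + Polynomial.X) 1
      ?_ ?_ P Pb hP hPb (hint a b c P hP) (hint a (b+1) c Pb hPb) n m h
    · calc (1 + Polynomial.X : Polynomial ℝ).degree
          ≤ max (1 : Polynomial ℝ).degree (Polynomial.X : Polynomial ℝ).degree :=
            Polynomial.degree_add_le _ _
        _ ≤ 1 := by rw [Polynomial.degree_one, Polynomial.degree_X]; simp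
    · intro z hz
      simp only [Set.mem_Ioo] at hz
      have h1 : (1 : ℝ) + z ≠ 0 := ne_of_gt (by linarith [hz.1])
      unfold gjWeight
      rw [Real.rpow_add_one h1]
      simp only [Polynomial.eval_add, Polynomial.eval_one, Polynomial.eval_X]
      ring
  · intro i n m h
    refine banded (gjWeight a b c p) (gjWeight a b (Function.update c i (c i + 1)) p)
      (p i) ((p i).natDegree) (Polynomial.degree_le_natDegree)
      ?_ P (Pc i) hP (hPc i) (hint a b c P hP)
      (hint a b (Function.update c i (c i + 1)) (Pc i) (hPc i)) n m h
    intro z hz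
    have hpz : ∀ j, 0 < (p j).eval z := fun j => hp j z (Set.Ioo_subset_Icc_self hz)
    unfold gjWeight
    have hupd : (fun j => (p j).eval z ^ (Function.update c i (c i + 1) j))
        = Function.update (fun j => (p j).eval z ^ (c j)) i ((p i).eval z ^ (c i + 1)) := by
      funext j
      by_cases hj : j = i
      · subst hj; simp
      · simp [Function.update_of_ne hj]
    rw [hupd, Finset.prod_update_of_mem (Finset.mem_univ i),
      ← Finset.prod_erase_mul Finset.univ _ (Finset.mem_univ i),
      Real.rpow_add (hpz i), Real.rpow_one]
    rw [show (Finset.univ : Finset (Fin N)) \ {i} = Finset.univ.erase i by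
      rw [Finset.sdiff_singleton_eq_erase]]
    ring
end

section
/- Let D = deg p₁ + ⋯ + deg p_N and write c+1⃗ for the exponent vector (c₁+1, …, c_N+1). Then the derivative operator is banded with bandwidth D+1 in the generalized Jacobi hierarchy: ∫_{−1}^{1} w^{(a+1,b+1,c+1⃗)}(z) · (d/dz P_n^{(a,b,c)})(z) · P_m^{(a+1,b+1,c+1⃗)}(z) dz = 0 unless n−1−D ≤ m ≤ n−1. -/
open MeasureTheory Polynomial

lemma integrableOn_two_rpow {a b : ℝ} (ha : -1 < a) (hb : -1 < b) :
    IntegrableOn (fun z : ℝ => (1 - z) ^ a * (1 + z) ^ b) (Set.Ioo (-1 : ℝ) 1) := by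
  have hsub : Set.Ioo (-1 : ℝ) 1 ⊆ Set.Ioc (-1 : ℝ) 0 ∪ Set.Ioo (0 : ℝ) 1 := by
    intro z hz
    rcases le_or_gt z 0 with h | h
    · exact Or.inl ⟨hz.1, h⟩
    · exact Or.inr ⟨h, hz.2⟩
  apply MeasureTheory.IntegrableOn.mono_set _ hsub
  apply MeasureTheory.IntegrableOn.union
  · -- on Ioc (-1) 0 : dominate by (max (2^a) 1) * (1+z)^b
    have hg : IntegrableOn (fun z : ℝ => max ((2:ℝ) ^ a) 1 * (1 + z) ^ b)
        (Set.Ioc (-1 : ℝ) 0) := by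
      have h0 : IntervalIntegrable (fun x : ℝ => x ^ b) volume 0 1 :=
        intervalIntegral.intervalIntegrable_rpow' hb
      have h1 : IntervalIntegrable (fun x : ℝ => (x + 1) ^ b) volume (-1) 0 := by
        have := h0.comp_add_right 1
        norm_num at this
        exact this
      have h2 : IntervalIntegrable (fun x : ℝ => (1 + x) ^ b) volume (-1) 0 := by
        simpa [add_comm] using h1
      have := (h2.const_mul (max ((2:ℝ) ^ a) 1))
      rw [intervalIntegrable_iff_integrableOn_Ioc_of_le (by norm_num)] at this
      exact this
    apply MeasureTheory.Integrable.mono hg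
    · apply ContinuousOn.aestronglyMeasurable _ measurableSet_Ioc
      apply ContinuousOn.mul
      · apply ContinuousOn.rpow_const (by fun_prop)
        intro z hz
        left
        simp only [Set.mem_Ioc] at hz
        nlinarith [hz.2]
      · apply ContinuousOn.rpow_const (by fun_prop)
        intro z hz
        left
        simp only [Set.mem_Ioc] at hz
        nlinarith [hz.1]
    · rw [MeasureTheory.ae_restrict_iff' measurableSet_Ioc]
      filter_upwards with z hz
      simp only [Set.mem_Ioc] at hz
      have h1z : (0:ℝ) < 1 - z := by linarith
      have h2z : (0:ℝ) < 1 + z := by linarith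
      rw [Real.norm_eq_abs, Real.norm_eq_abs, abs_mul, abs_of_pos (Real.rpow_pos_of_pos h1z a),
        abs_of_pos (Real.rpow_pos_of_pos h2z b),
        abs_of_nonneg (by positivity : (0:ℝ) ≤ max ((2:ℝ) ^ a) 1 * (1 + z) ^ b)]
      apply mul_le_mul_of_nonneg_right _ (Real.rpow_nonneg h2z.le b)
      rcases le_or_gt 0 a with h | h
      · exact le_max_of_le_left (Real.rpow_le_rpow h1z.le (by linarith) h)
      · exact le_max_of_le_right
          (Real.rpow_le_one_of_one_le_of_nonpos (by linarith) h.le)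
  · -- on Ioo 0 1 : dominate by (max (2^b) 1) * (1-z)^a
    have hg : IntegrableOn (fun z : ℝ => max ((2:ℝ) ^ b) 1 * (1 - z) ^ a)
        (Set.Ioc (0 : ℝ) 1) := by
      have h0 : IntervalIntegrable (fun x : ℝ => x ^ a) volume 0 1 :=
        intervalIntegral.intervalIntegrable_rpow' ha
      have h1 : IntervalIntegrable (fun x : ℝ => (1 - x) ^ a) volume 0 1 := by
        have := (h0.comp_sub_left 1)
        norm_num at this
        exact this.symm
      have := (h1.const_mul (max ((2:ℝ) ^ b) 1))
      rw [intervalIntegrable_iff_integrableOn_Ioc_of_le (by norm_num)] at this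
      exact this
    apply MeasureTheory.Integrable.mono (hg.mono_set Set.Ioo_subset_Ioc_self)
    · apply ContinuousOn.aestronglyMeasurable _ measurableSet_Ioo
      apply ContinuousOn.mul
      · apply ContinuousOn.rpow_const (by fun_prop)
        intro z hz
        left
        simp only [Set.mem_Ioo] at hz
        nlinarith [hz.2]
      · apply ContinuousOn.rpow_const (by fun_prop)
        intro z hz
        left
        simp only [Set.mem_Ioo] at hz
        nlinarith [hz.1]
    · rw [MeasureTheory.ae_restrict_iff' measurableSet_Ioo]
      filter_upwards with z hz
      simp only [Set.mem_Ioo] at hz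
      have h1z : (0:ℝ) < 1 - z := by linarith
      have h2z : (0:ℝ) < 1 + z := by linarith
      rw [Real.norm_eq_abs, Real.norm_eq_abs, abs_mul, abs_of_pos (Real.rpow_pos_of_pos h1z a),
        abs_of_pos (Real.rpow_pos_of_pos h2z b),
        abs_of_nonneg (by positivity : (0:ℝ) ≤ max ((2:ℝ) ^ b) 1 * (1 - z) ^ a)]
      rw [mul_comm ((1-z)^a)]
      apply mul_le_mul_of_nonneg_right _ (Real.rpow_nonneg h1z.le a)
      rcases le_or_gt 0 b with h | h
      · exact le_max_of_le_left (Real.rpow_le_rpow h2z.le (by linarith) h)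
      · exact le_max_of_le_right
          (Real.rpow_le_one_of_one_le_of_nonpos (by linarith) h.le)

lemma gjW_continuousOn {a b : ℝ} {N : ℕ} {c : Fin N → ℝ} {p : Fin N → Polynomial ℝ}
    (hp : ∀ i, ∀ z ∈ Set.Icc (-1 : ℝ) 1, 0 < (p i).eval z) {s : Set ℝ}
    (hs : s ⊆ Set.Icc (-1 : ℝ) 1) (h1 : ∀ z ∈ s, 1 - z ≠ 0 ∨ 0 ≤ a)
    (h2 : ∀ z ∈ s, 1 + z ≠ 0 ∨ 0 ≤ b) :
    ContinuousOn (fun z => gjWeight a b c p z) s := by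
  apply ContinuousOn.mul
  apply ContinuousOn.mul
  · exact ContinuousOn.rpow_const (by fun_prop) h1
  · exact ContinuousOn.rpow_const (by fun_prop) h2
  · apply continuousOn_finset_prod
    intro i _
    exact ContinuousOn.rpow_const ((p i).continuous.continuousOn)
      (fun z hz => Or.inl (hp i z (hs hz)).ne')

lemma integrableOn_gjW_mul {a b : ℝ} (ha : -1 < a) (hb : -1 < b) {N : ℕ} {c : Fin N → ℝ}
    {p : Fin N → Polynomial ℝ} (hp : ∀ i, ∀ z ∈ Set.Icc (-1 : ℝ) 1, 0 < (p i).eval z)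
    (q : Polynomial ℝ) :
    IntegrableOn (fun z => gjWeight a b c p z * q.eval z) (Set.Ioo (-1 : ℝ) 1) := by
  -- bound the continuous part on the compact interval
  have hcont : ContinuousOn (fun z => (∏ i, (p i).eval z ^ (c i)) * q.eval z)
      (Set.Icc (-1 : ℝ) 1) := by
    apply ContinuousOn.mul _ (q.continuous.continuousOn)
    apply continuousOn_finset_prod
    intro i _
    exact ContinuousOn.rpow_const ((p i).continuous.continuousOn)
      (fun z hz => Or.inl (hp i z hz).ne')
  obtain ⟨C, hC⟩ := (isCompact_Icc (a := (-1:ℝ)) (b := 1)).exists_bound_of_continuousOn hcont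
  have hint := ((integrableOn_two_rpow ha hb).const_mul C)
  apply MeasureTheory.Integrable.mono hint
  · apply ContinuousOn.aestronglyMeasurable _ measurableSet_Ioo
    apply ContinuousOn.mul
    · apply gjW_continuousOn hp Set.Ioo_subset_Icc_self
      · intro z hz; left; simp only [Set.mem_Ioo] at hz; nlinarith [hz.2]
      · intro z hz; left; simp only [Set.mem_Ioo] at hz; nlinarith [hz.1]
    · exact q.continuous.continuousOn
  · rw [MeasureTheory.ae_restrict_iff' measurableSet_Ioo]
    filter_upwards with z hz
    simp only [Set.mem_Ioo] at hz
    have h1z : (0:ℝ) < 1 - z := by linarith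
    have h2z : (0:ℝ) < 1 + z := by linarith
    have hCz := hC z (Set.mem_Icc.mpr ⟨hz.1.le, hz.2.le⟩)
    have hC0 : (0:ℝ) ≤ C := le_trans (norm_nonneg _) hCz
    rw [Real.norm_eq_abs, Real.norm_eq_abs, gjWeight]
    rw [show (1 - z) ^ a * (1 + z) ^ b * (∏ i, (p i).eval z ^ (c i)) * q.eval z
        = ((1 - z) ^ a * (1 + z) ^ b) * ((∏ i, (p i).eval z ^ (c i)) * q.eval z) by ring]
    rw [abs_mul, abs_of_pos (by positivity : (0:ℝ) < (1 - z) ^ a * (1 + z) ^ b),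
      abs_mul (C) _, abs_of_nonneg hC0,
      abs_of_pos (by positivity : (0:ℝ) < (1 - z) ^ a * (1 + z) ^ b), mul_comm C]
    exact mul_le_mul_of_nonneg_left (by rw [← Real.norm_eq_abs]; exact hCz) (by positivity)

lemma orth_lt (w : ℝ → ℝ) (P : ℕ → Polynomial ℝ) (hP : IsONPolys w P)
    (hInt : ∀ q : Polynomial ℝ,
      IntegrableOn (fun z => w z * q.eval z) (Set.Ioo (-1 : ℝ) 1))
    (m : ℕ) :
    ∀ (d : ℕ) (q : Polynomial ℝ), q.natDegree ≤ d → q.degree < (m : ℕ) →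
      (∫ z in Set.Ioo (-1 : ℝ) 1, w z * q.eval z * (P m).eval z) = 0 := by
  obtain ⟨hdeg, hlc, horth⟩ := hP
  intro d
  induction d using Nat.strong_induction_on with
  | _ d IH =>
    intro q hqd hqm
    rcases eq_or_ne q 0 with rfl | hq
    · simp
    · set e := q.natDegree with he
      have hPe : (P e).natDegree = e := natDegree_eq_of_degree_eq_some (hdeg e)
      have hPene : P e ≠ 0 := by
        intro h
        have := hdeg e
        rw [h, degree_zero] at this
        exact WithBot.bot_ne_coe this
      have hlce : (P e).leadingCoeff ≠ 0 := (hlc e).ne'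
      set k := q.leadingCoeff / (P e).leadingCoeff with hk
      have hkne : k ≠ 0 := div_ne_zero (leadingCoeff_ne_zero.mpr hq) hlce
      have hdegq : q.degree = (e : ℕ) := degree_eq_natDegree hq
      have hdegCk : (C k * P e).degree = q.degree := by
        rw [degree_C_mul hkne, hdegq, hdeg e]
      have hlcCk : (C k * P e).leadingCoeff = q.leadingCoeff := by
        rw [leadingCoeff_mul, leadingCoeff_C, hk, div_mul_cancel₀ _ hlce]
      set r := q - C k * P e with hr
      have hem : e < m := by
        rw [hdegq] at hqm
        exact_mod_cast hqm
      have hsplit : (fun z => w z * q.eval z * (P m).eval z)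
          = fun z => w z * ((r * P m).eval z) + k * (w z * (P e).eval z * (P m).eval z) := by
        funext z
        simp only [hr, eval_mul, eval_sub, eval_mul, eval_C]
        ring
      have hint1 : IntegrableOn (fun z => w z * ((r * P m).eval z)) (Set.Ioo (-1:ℝ) 1) :=
        hInt (r * P m)
      have hfeq : (fun z => k * (w z * (P e).eval z * (P m).eval z))
          = fun z => k * (w z * ((P e * P m).eval z)) := by
        funext z; simp only [eval_mul]; ring
      have hint2 : IntegrableOn (fun z => k * (w z * (P e).eval z * (P m).eval z))
          (Set.Ioo (-1:ℝ) 1) := by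
        rw [hfeq]; exact (hInt (P e * P m)).const_mul k
      have horth' : (∫ z in Set.Ioo (-1:ℝ) 1, k * (w z * (P e).eval z * (P m).eval z)) = 0 := by
        rw [MeasureTheory.integral_const_mul, horth e m, if_neg hem.ne, mul_zero]
      rw [hsplit, MeasureTheory.integral_add hint1 hint2, horth']
      have hr0 : (∫ z in Set.Ioo (-1:ℝ) 1, w z * ((r * P m).eval z)) = 0 := by
        rcases eq_or_ne r 0 with h0 | hrne
        · simp [h0]
        · have hrd : r.degree < q.degree := by
            apply degree_sub_lt hdegCk.symm hq hlcCk.symm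
          have hrlt : r.natDegree < e := by
            have := natDegree_lt_natDegree hrne hrd
            exact lt_of_lt_of_le this (le_of_eq he.symm)
          have := IH r.natDegree (lt_of_lt_of_le hrlt hqd) r le_rfl
            (lt_trans hrd hqm)
          rw [← this]
          congr 1
          funext z
          simp [eval_mul]; ring
      rw [hr0]
      ring

noncomputable def gjQ (a b : ℝ) {N : ℕ} (c : Fin N → ℝ) (p : Fin N → Polynomial ℝ) :
    Polynomial ℝ :=
  C (b + 1) * ((1 - X) * ∏ i, p i) - C (a + 1) * ((1 + X) * ∏ i, p i)
    + (1 - X) * ((1 + X) * ∑ i, C (c i + 1)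
        * (derivative (p i) * ∏ j ∈ Finset.univ.erase i, p j))

noncomputable def gjH (a b : ℝ) {N : ℕ} (c : Fin N → ℝ) (p : Fin N → Polynomial ℝ)
    (v : Polynomial ℝ) : Polynomial ℝ :=
  (1 - X) * ((1 + X) * ((∏ i, p i) * derivative v)) + gjQ a b c p * v

lemma gjH_hasDerivAt (a b : ℝ) {N : ℕ} (c : Fin N → ℝ) (p : Fin N → Polynomial ℝ)
    (hp : ∀ i, ∀ z ∈ Set.Icc (-1 : ℝ) 1, 0 < (p i).eval z)
    (u v : Polynomial ℝ) {z : ℝ} (hz : z ∈ Set.Ioo (-1 : ℝ) 1) :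
    HasDerivAt
      (fun z => gjWeight (a + 1) (b + 1) (fun i => c i + 1) p z * u.eval z * v.eval z)
      (gjWeight a b c p z * ((u * gjH a b c p v).eval z)
        + gjWeight (a + 1) (b + 1) (fun i => c i + 1) p z
            * (derivative u).eval z * v.eval z) z := by
  simp only [Set.mem_Ioo] at hz
  have h1 : (0:ℝ) < 1 - z := by linarith
  have h2 : (0:ℝ) < 1 + z := by linarith
  have hpz : ∀ i, 0 < (p i).eval z := fun i => hp i z ⟨hz.1.le, hz.2.le⟩
  have d1 : HasDerivAt (fun z : ℝ => (1 - z) ^ (a + 1))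
      (-1 * (a + 1) * (1 - z) ^ (a + 1 - 1)) z := by
    have : HasDerivAt (fun z : ℝ => 1 - z) (-1) z := by
      simpa using (hasDerivAt_id z).const_sub 1
    exact this.rpow_const (Or.inl h1.ne')
  have d2 : HasDerivAt (fun z : ℝ => (1 + z) ^ (b + 1))
      (1 * (b + 1) * (1 + z) ^ (b + 1 - 1)) z := by
    have : HasDerivAt (fun z : ℝ => 1 + z) 1 z := by
      simpa using (hasDerivAt_id z).const_add 1
    exact this.rpow_const (Or.inl h2.ne')
  have d3 : HasDerivAt (fun z : ℝ => ∏ i, (p i).eval z ^ (c i + 1))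
      (∑ i, (∏ j ∈ Finset.univ.erase i, (p j).eval z ^ (c j + 1))
        • ((derivative (p i)).eval z * (c i + 1) * (p i).eval z ^ (c i + 1 - 1))) z := by
    exact HasDerivAt.fun_finsetProd fun i _ =>
      ((p i).hasDerivAt z).rpow_const (Or.inl (hpz i).ne')
  have dF := (((d1.fun_mul d2).fun_mul d3).fun_mul (u.hasDerivAt z)).fun_mul (v.hasDerivAt z)
  refine dF.congr_deriv (Eq.symm ?_)
  simp only [smul_eq_mul, add_sub_cancel_right, gjWeight, gjH, gjQ, eval_add, eval_mul,
    eval_sub, eval_one, eval_X, eval_C, eval_prod, eval_finset_sum]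
  have hprod : (∏ i, (p i).eval z ^ (c i + 1))
      = (∏ i, (p i).eval z ^ (c i)) * ∏ i, (p i).eval z := by
    rw [← Finset.prod_mul_distrib]
    exact Finset.prod_congr rfl fun i _ => Real.rpow_add_one (hpz i).ne' (c i)
  have hsum : (∑ i, (∏ j ∈ Finset.univ.erase i, (p j).eval z ^ (c j + 1))
        * ((derivative (p i)).eval z * (c i + 1) * (p i).eval z ^ (c i)))
      = (∏ i, (p i).eval z ^ (c i)) * ∑ i, (c i + 1)
          * ((derivative (p i)).eval z * ∏ j ∈ Finset.univ.erase i, (p j).eval z) := by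
    rw [Finset.mul_sum]
    refine Finset.sum_congr rfl fun i _ => ?_
    have he : (∏ j ∈ Finset.univ.erase i, (p j).eval z ^ (c j + 1))
        = (∏ j ∈ Finset.univ.erase i, (p j).eval z ^ (c j))
            * ∏ j ∈ Finset.univ.erase i, (p j).eval z := by
      rw [← Finset.prod_mul_distrib]
      exact Finset.prod_congr rfl fun j _ => Real.rpow_add_one (hpz j).ne' (c j)
    rw [he, ← Finset.prod_erase_mul Finset.univ (fun j => (p j).eval z ^ (c j))
      (Finset.mem_univ i)]
    ring
  rw [hsum, hprod, Real.rpow_add_one h1.ne' a, Real.rpow_add_one h2.ne' b]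
  ring

lemma gjH_natDegree_le (a b : ℝ) {N : ℕ} (c : Fin N → ℝ) (p : Fin N → Polynomial ℝ)
    (v : Polynomial ℝ) :
    (gjH a b c p v).natDegree ≤ v.natDegree + 1 + ∑ i, (p i).natDegree := by
  set D := ∑ i, (p i).natDegree with hD
  set m := v.natDegree with hm
  have h1X : (1 - X : Polynomial ℝ).natDegree ≤ 1 := (natDegree_sub_le _ _).trans (by simp)
  have h2X : (1 + X : Polynomial ℝ).natDegree ≤ 1 := (natDegree_add_le _ _).trans (by simp)
  have hPi : (∏ i, p i).natDegree ≤ D := natDegree_prod_le _ _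
  have hQ : (gjQ a b c p).natDegree ≤ D + 1 := by
    apply (natDegree_add_le _ _).trans
    apply max_le
    · apply (natDegree_sub_le _ _).trans
      apply max_le
      · refine (natDegree_mul_le).trans ?_
        have := (natDegree_mul_le (p := (1 - X : Polynomial ℝ)) (q := ∏ i, p i))
        simp only [natDegree_C]
        omega
      · refine (natDegree_mul_le).trans ?_
        have := (natDegree_mul_le (p := (1 + X : Polynomial ℝ)) (q := ∏ i, p i))
        simp only [natDegree_C]
        omega
    · by_cases hall : ∀ i, (p i).natDegree = 0
      · have : (∑ i, C (c i + 1) * (derivative (p i) * ∏ j ∈ Finset.univ.erase i, p j))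
            = 0 := by
          apply Finset.sum_eq_zero
          intro i _
          obtain ⟨x, hx⟩ : ∃ x, p i = C x := ⟨(p i).coeff 0, eq_C_of_natDegree_eq_zero (hall i)⟩
          rw [hx]
          simp
        rw [this]
        simp
      · push_neg at hall
        obtain ⟨i₀, hi₀⟩ := hall
        have hD1 : 1 ≤ D := by
          have h6 : (p i₀).natDegree ≤ ∑ i, (p i).natDegree :=
            Finset.single_le_sum (f := fun i => (p i).natDegree)
              (fun i _ => Nat.zero_le _) (Finset.mem_univ i₀)
          rw [← hD] at h6
          omega
        have hsum : (∑ i, C (c i + 1) * (derivative (p i)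
            * ∏ j ∈ Finset.univ.erase i, p j)).natDegree ≤ D - 1 := by
          apply natDegree_sum_le_of_forall_le
          intro i _
          by_cases hi : (p i).natDegree = 0
          · obtain ⟨x, hx⟩ : ∃ x, p i = C x := ⟨(p i).coeff 0, eq_C_of_natDegree_eq_zero hi⟩
            rw [hx]
            simp
          · refine (natDegree_mul_le).trans ?_
            have h2 := (natDegree_mul_le (p := derivative (p i))
              (q := ∏ j ∈ Finset.univ.erase i, p j))
            have h3 : (derivative (p i)).natDegree ≤ (p i).natDegree - 1 :=
              natDegree_derivative_le _
            have h4 : (∏ j ∈ Finset.univ.erase i, p j).natDegree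
                ≤ ∑ j ∈ Finset.univ.erase i, (p j).natDegree := natDegree_prod_le _ _
            have h5 : (∑ j ∈ Finset.univ.erase i, (p j).natDegree) + (p i).natDegree = D :=
              Finset.sum_erase_add _ _ (Finset.mem_univ i)
            simp only [natDegree_C]
            omega
        refine (natDegree_mul_le).trans ?_
        have := (natDegree_mul_le (p := (1 + X : Polynomial ℝ))
          (q := ∑ i, C (c i + 1) * (derivative (p i) * ∏ j ∈ Finset.univ.erase i, p j)))
        omega
  apply (natDegree_add_le _ _).trans
  apply max_le
  · by_cases hm0 : m = 0
    · obtain ⟨x, hx⟩ : ∃ x, v = C x := ⟨v.coeff 0, eq_C_of_natDegree_eq_zero hm0⟩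
      rw [hx]
      simp
    · have hdv : (derivative v).natDegree ≤ m - 1 := natDegree_derivative_le _
      refine (natDegree_mul_le).trans ?_
      have h2 := (natDegree_mul_le (p := (1 + X : Polynomial ℝ))
        (q := (∏ i, p i) * derivative v))
      have h3 := (natDegree_mul_le (p := (∏ i, p i)) (q := derivative v))
      omega
  · refine (natDegree_mul_le).trans ?_
    omega

lemma gjIBP (a b : ℝ) (ha : -1 < a) (hb : -1 < b) {N : ℕ} (c : Fin N → ℝ)
    (p : Fin N → Polynomial ℝ) (hp : ∀ i, ∀ z ∈ Set.Icc (-1 : ℝ) 1, 0 < (p i).eval z)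
    (u v : Polynomial ℝ) :
    (∫ z in Set.Ioo (-1 : ℝ) 1,
        gjWeight (a + 1) (b + 1) (fun i => c i + 1) p z
          * (derivative u).eval z * v.eval z)
      = - ∫ z in Set.Ioo (-1 : ℝ) 1, gjWeight a b c p z * ((u * gjH a b c p v).eval z) := by
  set w' : ℝ → ℝ := fun z => gjWeight (a + 1) (b + 1) (fun i => c i + 1) p z with hw'
  set F : ℝ → ℝ := fun z => w' z * u.eval z * v.eval z with hF
  set g1 : ℝ → ℝ := fun z => gjWeight a b c p z * ((u * gjH a b c p v).eval z) with hg1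
  set g2 : ℝ → ℝ := fun z => w' z * (derivative u).eval z * v.eval z with hg2
  have hInt1 : IntegrableOn g1 (Set.Ioo (-1 : ℝ) 1) := integrableOn_gjW_mul ha hb hp _
  have hInt2 : IntegrableOn g2 (Set.Ioo (-1 : ℝ) 1) := by
    have h := integrableOn_gjW_mul (c := fun i => c i + 1)
      (by linarith : (-1:ℝ) < a + 1) (by linarith : (-1:ℝ) < b + 1) hp (derivative u * v)
    have he : g2 = fun z => gjWeight (a+1) (b+1) (fun i => c i + 1) p z
        * ((derivative u * v).eval z) := by
      funext z
      simp only [hg2, hw', eval_mul, mul_assoc]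
    rw [he]
    exact h
  have hIntf : IntervalIntegrable (fun z => g1 z + g2 z) volume (-1) 1 := by
    rw [intervalIntegrable_iff_integrableOn_Ioc_of_le (by norm_num)]
    have h2 : IntegrableOn (fun z => g1 z + g2 z) (Set.Ioc (-1:ℝ) 1) :=
      MeasureTheory.IntegrableOn.congr_set_ae (hInt1.add hInt2)
        MeasureTheory.Ioo_ae_eq_Ioc.symm
    exact h2
  have hcont : ContinuousOn F (Set.Icc (-1 : ℝ) 1) := by
    apply ContinuousOn.mul
    apply ContinuousOn.mul
    · exact gjW_continuousOn hp le_rfl (fun z _ => Or.inr (by linarith))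
        (fun z _ => Or.inr (by linarith))
    · exact u.continuous.continuousOn
    · exact v.continuous.continuousOn
  have hderiv : ∀ x ∈ Set.Ioo (-1 : ℝ) 1, HasDerivWithinAt F (g1 x + g2 x) (Set.Ioi x) x :=
    fun x hx => (gjH_hasDerivAt a b c p hp u v hx).hasDerivWithinAt
  have htfc := intervalIntegral.integral_eq_sub_of_hasDeriv_right_of_le (by norm_num)
    hcont hderiv hIntf
  have hF1 : F 1 = 0 := by
    have h0 : ((1:ℝ) - 1) ^ (a + 1) = 0 := by
      rw [show (1:ℝ) - 1 = 0 by norm_num, Real.zero_rpow (by linarith)]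
    simp only [hF, hw', gjWeight]
    rw [h0]
    ring
  have hFm1 : F (-1) = 0 := by
    have h0 : ((1:ℝ) + -1) ^ (b + 1) = 0 := by
      rw [show (1:ℝ) + -1 = 0 by norm_num, Real.zero_rpow (by linarith)]
    simp only [hF, hw', gjWeight]
    rw [h0]
    ring
  rw [hF1, hFm1, sub_zero] at htfc
  rw [intervalIntegral.integral_of_le (by norm_num : (-1:ℝ) ≤ 1)] at htfc
  have hIoo : (∫ z in Set.Ioo (-1:ℝ) 1, (g1 z + g2 z)) = 0 := by
    rw [MeasureTheory.setIntegral_congr_set MeasureTheory.Ioo_ae_eq_Ioc]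
    exact htfc
  rw [MeasureTheory.integral_add hInt1 hInt2] at hIoo
  linarith [hIoo]

/-- The derivative operator is banded with bandwidth `D+1` in the generalized Jacobi
hierarchy, where `D = Σᵢ deg pᵢ`:  the matrix entry of `d/dz` from the `(a,b,c)` basis to
the `(a+1,b+1,c+1⃗)` basis vanishes unless `n-1-D ≤ m ≤ n-1`. -/
theorem statement8 (a b : ℝ) (ha : -1 < a) (hb : -1 < b) (N : ℕ) (c : Fin N → ℝ)
    (p : Fin N → Polynomial ℝ) (hp : ∀ i, ∀ z ∈ Set.Icc (-1 : ℝ) 1, 0 < (p i).eval z)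
    (P P' : ℕ → Polynomial ℝ)
    (hP : IsONPolys (gjWeight a b c p) P)
    (hP' : IsONPolys (gjWeight (a + 1) (b + 1) (fun i => c i + 1) p) P')
    (D : ℕ) (hD : D = ∑ i, (p i).natDegree) :
    ∀ n m : ℕ, ¬(n ≤ m + 1 + D ∧ m + 1 ≤ n) →
      (∫ z in Set.Ioo (-1 : ℝ) 1,
        gjWeight (a + 1) (b + 1) (fun i => c i + 1) p z
          * (Polynomial.derivative (P n)).eval z * (P' m).eval z) = 0 := by
  intro n m hnm
  by_cases hcase : m + 1 ≤ n
  · -- integration by parts case : n > m + 1 + D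
    have h2 : m + 1 + D < n := by
      by_contra hle
      push_neg at hle
      exact hnm ⟨hle, hcase⟩
    rw [gjIBP a b ha hb c p hp (P n) (P' m)]
    have hm' : (P' m).natDegree = m := natDegree_eq_of_degree_eq_some (hP'.1 m)
    have hdegH : (gjH a b c p (P' m)).degree < (n : ℕ) := by
      have h3 : (gjH a b c p (P' m)).natDegree ≤ m + 1 + D := by
        have h4 := gjH_natDegree_le a b c p (P' m)
        rw [hm', ← hD] at h4
        exact h4
      calc (gjH a b c p (P' m)).degree
          ≤ ((gjH a b c p (P' m)).natDegree : WithBot ℕ) := degree_le_natDegree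
        _ ≤ ((m + 1 + D : ℕ) : WithBot ℕ) := by exact_mod_cast h3
        _ < ((n : ℕ) : WithBot ℕ) := by exact_mod_cast h2
    have key := orth_lt (gjWeight a b c p) P hP
      (fun q => integrableOn_gjW_mul ha hb hp q) n (gjH a b c p (P' m)).natDegree
      (gjH a b c p (P' m)) le_rfl hdegH
    have heq : (fun z => gjWeight a b c p z * ((P n * gjH a b c p (P' m)).eval z))
        = fun z => gjWeight a b c p z * (gjH a b c p (P' m)).eval z * (P n).eval z := by
      funext z
      simp only [eval_mul]
      ring
    rw [heq, key, neg_zero]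
  · -- trivial orthogonality case : n ≤ m
    have hnm' : n ≤ m := by omega
    have hPn0 : P n ≠ 0 := by
      intro h
      have h5 := hP.1 n
      rw [h, degree_zero] at h5
      exact WithBot.bot_ne_coe h5
    have hdeg : (derivative (P n)).degree < (m : ℕ) := by
      calc (derivative (P n)).degree < (P n).degree := degree_derivative_lt hPn0
        _ = (n : ℕ) := hP.1 n
        _ ≤ ((m : ℕ) : WithBot ℕ) := by exact_mod_cast hnm'
    exact orth_lt (gjWeight (a + 1) (b + 1) (fun i => c i + 1) p) P' hP'
      (fun q => integrableOn_gjW_mul (by linarith) (by linarith) hp q) m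
      (derivative (P n)).natDegree (derivative (P n)) le_rfl hdeg
end

section
/- Set ρ(z) = ∏ᵢ pᵢ(z), ρ̂(z) = Σᵢ cᵢ pᵢ′(z) ∏_{l≠i} p_l(z), D = deg ρ, and define the operator (Lf)(z) = ρ(z) f′(z) + ρ̂(z) f(z). Write c−1⃗ for the exponent vector (c₁−1, …, c_N−1). Then L maps polynomials of degree n to polynomials of degree at most n+D−1, and L is banded with bandwidth D+1 in the generalized Jacobi hierarchy: ∫_{−1}^{1} w^{(a+1,b+1,c−1⃗)}(z) · (L P_n^{(a,b,c)})(z) · P_m^{(a+1,b+1,c−1⃗)}(z) dz = 0 unless n−1 ≤ m ≤ n−1+D. -/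
open MeasureTheory Polynomial

namespace GJ9

variable {w : ℝ → ℝ} {P : ℕ → Polynomial ℝ} {a b : ℝ} {N : ℕ} {c : Fin N → ℝ}
  {p : Fin N → Polynomial ℝ}

set_option linter.unusedTactic false
set_option linter.unreachableTactic false

lemma natDeg (h : IsONPolys w P) (k : ℕ) : (P k).natDegree = k :=
  Polynomial.natDegree_eq_of_degree_eq_some (h.1 k)

lemma Pne (h : IsONPolys w P) (k : ℕ) : P k ≠ 0 :=
  fun h0 => by simpa [h0] using (h.2.1 k).ne'

lemma span_lemma (h : IsONPolys w P) (n : ℕ) :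
    ∀ q : Polynomial ℝ, q.natDegree ≤ n → q ∈ Submodule.span ℝ (P '' Set.Iic n) := by
  induction n with
  | zero =>
    intro q hq
    have h0 : (P 0).natDegree = 0 := natDeg h 0
    have hγ : (P 0).coeff 0 ≠ 0 := by
      have := (h.2.1 0).ne'
      rwa [Polynomial.leadingCoeff, h0] at this
    have hP0 : P 0 = Polynomial.C ((P 0).coeff 0) := Polynomial.eq_C_of_natDegree_le_zero h0.le
    have hqc : q = Polynomial.C (q.coeff 0) := Polynomial.eq_C_of_natDegree_le_zero hq
    have : q = (q.coeff 0 / (P 0).coeff 0) • P 0 := by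
      rw [Polynomial.smul_eq_C_mul]
      conv_lhs => rw [hqc]
      conv_rhs => rw [hP0]
      rw [Polynomial.coeff_C_zero, ← Polynomial.C_mul, div_mul_cancel₀ _ hγ]
    rw [this]
    exact Submodule.smul_mem _ _ (Submodule.subset_span ⟨0, by simp, rfl⟩)
  | succ n ih =>
    intro q hq
    rcases Nat.lt_or_ge q.natDegree (n+1) with hlt | hge
    · exact Submodule.span_mono (Set.image_mono (Set.Iic_subset_Iic.2 (Nat.le_succ n)))
        (ih q (Nat.lt_succ_iff.1 hlt))
    have hdeg : q.natDegree = n + 1 := le_antisymm hq hge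
    have hq0 : q ≠ 0 := fun h0 => by simp [h0] at hdeg
    set α := q.leadingCoeff / (P (n+1)).leadingCoeff with hα
    have hαne : α ≠ 0 := div_ne_zero (Polynomial.leadingCoeff_ne_zero.2 hq0) (h.2.1 (n+1)).ne'
    have hdegC : (Polynomial.C α * P (n+1)).degree = q.degree := by
      rw [Polynomial.degree_C_mul hαne, h.1 (n+1), Polynomial.degree_eq_natDegree hq0, hdeg]
    have hlcC : q.leadingCoeff = (Polynomial.C α * P (n+1)).leadingCoeff := by
      rw [Polynomial.leadingCoeff_mul, Polynomial.leadingCoeff_C, hα,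
        div_mul_cancel₀ _ (h.2.1 (n+1)).ne']
    have hsub : (q - Polynomial.C α * P (n+1)).degree < q.degree :=
      Polynomial.degree_sub_lt hdegC.symm hq0 hlcC
    have hsubnat : (q - Polynomial.C α * P (n+1)).natDegree ≤ n := by
      rcases eq_or_ne (q - Polynomial.C α * P (n+1)) 0 with h0 | h0
      · simp [h0]
      · have := Polynomial.natDegree_lt_natDegree h0 hsub
        omega
    have hmem := ih _ hsubnat
    have : q = (q - Polynomial.C α * P (n+1)) + α • P (n+1) := by
      rw [Polynomial.smul_eq_C_mul]; ring
    rw [this]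
    exact Submodule.add_mem _
      (Submodule.span_mono (Set.image_mono (Set.Iic_subset_Iic.2 (Nat.le_succ n))) hmem)
      (Submodule.smul_mem _ _ (Submodule.subset_span ⟨n+1, Set.mem_Iic.2 le_rfl, rfl⟩))

lemma integrable_sq (h : IsONPolys w P) (k : ℕ) :
    IntegrableOn (fun z => w z * (P k).eval z * (P k).eval z) (Set.Ioo (-1 : ℝ) 1) := by
  by_contra hcon
  have := h.2.2 k k
  rw [if_pos rfl] at this
  rw [MeasureTheory.integral_undef hcon] at this
  norm_num at this

lemma integrable_pair (h : IsONPolys w P)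
    (hw : ContinuousOn w (Set.Ioo (-1 : ℝ) 1))
    (hw0 : ∀ z ∈ Set.Ioo (-1 : ℝ) 1, 0 ≤ w z) (j k : ℕ) :
    IntegrableOn (fun z => w z * (P j).eval z * (P k).eval z) (Set.Ioo (-1 : ℝ) 1) := by
  have hmeas : AEStronglyMeasurable (fun z => w z * (P j).eval z * (P k).eval z)
      (volume.restrict (Set.Ioo (-1 : ℝ) 1)) := by
    apply ContinuousOn.aestronglyMeasurable _ measurableSet_Ioo
    exact (hw.mul ((P j).continuous_aeval.continuousOn)).mul ((P k).continuous_aeval.continuousOn)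
  refine MeasureTheory.Integrable.mono'
    (((integrable_sq h j).add (integrable_sq h k)).const_mul (1/2 : ℝ)) hmeas ?_
  rw [MeasureTheory.ae_restrict_iff' measurableSet_Ioo]
  filter_upwards with z hz
  have hwz := hw0 z hz
  have key : |(P j).eval z * (P k).eval z| ≤
      1/2 * ((P j).eval z * (P j).eval z + (P k).eval z * (P k).eval z) := by
    rcases abs_cases ((P j).eval z * (P k).eval z) with ⟨he, _⟩ | ⟨he, _⟩ <;> rw [he] <;> nlinarith [sq_nonneg ((P j).eval z - (P k).eval z), sq_nonneg ((P j).eval z + (P k).eval z)]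
  calc ‖w z * (P j).eval z * (P k).eval z‖ = w z * |(P j).eval z * (P k).eval z| := by
        rw [Real.norm_eq_abs, mul_assoc, abs_mul, abs_of_nonneg hwz]
    _ ≤ w z * (1/2 * ((P j).eval z * (P j).eval z + (P k).eval z * (P k).eval z)) :=
        mul_le_mul_of_nonneg_left key hwz
    _ = 1/2 * (w z * (P j).eval z * (P j).eval z + w z * (P k).eval z * (P k).eval z) := by ring

lemma integrable_poly (h : IsONPolys w P)
    (hw : ContinuousOn w (Set.Ioo (-1 : ℝ) 1))
    (hw0 : ∀ z ∈ Set.Ioo (-1 : ℝ) 1, 0 ≤ w z) (q : Polynomial ℝ) (k : ℕ) :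
    IntegrableOn (fun z => w z * q.eval z * (P k).eval z) (Set.Ioo (-1 : ℝ) 1) := by
  have hmem := span_lemma h q.natDegree q le_rfl
  have key : ∀ x ∈ Submodule.span ℝ (P '' Set.Iic q.natDegree),
      IntegrableOn (fun z => w z * x.eval z * (P k).eval z) (Set.Ioo (-1 : ℝ) 1) := by
    intro x hx
    induction hx using Submodule.span_induction with
      | mem x hx =>
        obtain ⟨j, -, rfl⟩ := hx
        exact integrable_pair h hw hw0 j k
      | zero => simp [IntegrableOn]
      | add x y hx hy ihx ihy =>
        have : (fun z => w z * (x + y).eval z * (P k).eval z)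
            = (fun z => w z * x.eval z * (P k).eval z) + fun z => w z * y.eval z * (P k).eval z := by
          funext z; simp; ring
        rw [IntegrableOn, this]
        exact ihx.add ihy
      | smul a x hx ihx =>
        have : (fun z => w z * (a • x).eval z * (P k).eval z)
            = fun z => a * (w z * x.eval z * (P k).eval z) := by
          funext z; simp; ring
        rw [IntegrableOn, this]
        exact ihx.const_mul a
  exact key q hmem

lemma integrable_poly2 (h : IsONPolys w P)
    (hw : ContinuousOn w (Set.Ioo (-1 : ℝ) 1))
    (hw0 : ∀ z ∈ Set.Ioo (-1 : ℝ) 1, 0 ≤ w z) (q r : Polynomial ℝ) :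
    IntegrableOn (fun z => w z * q.eval z * r.eval z) (Set.Ioo (-1 : ℝ) 1) := by
  have hmem := span_lemma h r.natDegree r le_rfl
  have key : ∀ x ∈ Submodule.span ℝ (P '' Set.Iic r.natDegree),
      IntegrableOn (fun z => w z * q.eval z * x.eval z) (Set.Ioo (-1 : ℝ) 1) := by
    intro x hx
    induction hx using Submodule.span_induction with
      | mem x hx =>
        obtain ⟨j, -, rfl⟩ := hx
        exact integrable_poly h hw hw0 q j
      | zero => simp [IntegrableOn]
      | add x y hx hy ihx ihy =>
        have : (fun z => w z * q.eval z * (x + y).eval z)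
            = (fun z => w z * q.eval z * x.eval z) + fun z => w z * q.eval z * y.eval z := by
          funext z; simp; ring
        rw [IntegrableOn, this]
        exact ihx.add ihy
      | smul a x hx ihx =>
        have : (fun z => w z * q.eval z * (a • x).eval z)
            = fun z => a * (w z * q.eval z * x.eval z) := by
          funext z; simp; ring
        rw [IntegrableOn, this]
        exact ihx.const_mul a
  exact key r hmem

lemma orth (h : IsONPolys w P)
    (hw : ContinuousOn w (Set.Ioo (-1 : ℝ) 1))
    (hw0 : ∀ z ∈ Set.Ioo (-1 : ℝ) 1, 0 ≤ w z) (q : Polynomial ℝ) (n : ℕ)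
    (hq : q.natDegree < n) :
    (∫ z in Set.Ioo (-1 : ℝ) 1, w z * q.eval z * (P n).eval z) = 0 := by
  have hmem := span_lemma h q.natDegree q le_rfl
  have key : ∀ x ∈ Submodule.span ℝ (P '' Set.Iic q.natDegree),
      (∫ z in Set.Ioo (-1 : ℝ) 1, w z * x.eval z * (P n).eval z) = 0 ∧
        x.natDegree ≤ q.natDegree := by
    intro x hx
    induction hx using Submodule.span_induction with
    | mem x hx =>
      obtain ⟨j, hj, rfl⟩ := hx
      rw [Set.mem_Iic] at hj
      constructor
      · have := h.2.2 j n
        rw [if_neg (by omega)] at this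
        exact this
      · rw [Polynomial.natDegree_eq_of_degree_eq_some (h.1 j)]; exact hj
    | zero => simp
    | add x y hx hy ihx ihy =>
      constructor
      · have heq : (fun z => w z * (x + y).eval z * (P n).eval z)
            = fun z => (w z * x.eval z * (P n).eval z) + (w z * y.eval z * (P n).eval z) := by
          funext z; simp; ring
        rw [heq, MeasureTheory.integral_add (integrable_poly h hw hw0 x n)
          (integrable_poly h hw hw0 y n), ihx.1, ihy.1, add_zero]
      · exact le_trans (Polynomial.natDegree_add_le x y) (max_le ihx.2 ihy.2)
    | smul a x hx ihx =>
      constructor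
      · have heq : (fun z => w z * (a • x).eval z * (P n).eval z)
            = fun z => a * (w z * x.eval z * (P n).eval z) := by
          funext z; simp; ring
        rw [heq, MeasureTheory.integral_const_mul, ihx.1, mul_zero]
      · exact le_trans (Polynomial.natDegree_smul_le a x) ihx.2
  exact (key q hmem).1

lemma gj_contOn (hp : ∀ i, ∀ z ∈ Set.Icc (-1 : ℝ) 1, 0 < (p i).eval z) :
    ContinuousOn (gjWeight a b c p) (Set.Ioo (-1 : ℝ) 1) := by
  intro z hz
  have hz' : z ∈ Set.Icc (-1:ℝ) 1 := Set.mem_Icc.2 ⟨hz.1.le, hz.2.le⟩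
  apply ContinuousAt.continuousWithinAt
  have h1 : ContinuousAt (fun z : ℝ => (1 - z) ^ a) z :=
    ContinuousAt.rpow_const (by fun_prop) (Or.inl (by simp; linarith [hz.2]))
  have h2 : ContinuousAt (fun z : ℝ => (1 + z) ^ b) z :=
    ContinuousAt.rpow_const (by fun_prop) (Or.inl (by simp; linarith [hz.1]))
  have h3 : ContinuousAt (fun z : ℝ => ∏ i, (p i).eval z ^ (c i)) z := by
    apply tendsto_finset_prod
    intro i _
    exact ContinuousAt.rpow_const ((p i).continuous.continuousAt) (Or.inl (hp i z hz').ne')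
  exact (h1.mul h2).mul h3

lemma gj_pos (hp : ∀ i, ∀ z ∈ Set.Icc (-1 : ℝ) 1, 0 < (p i).eval z)
    {z : ℝ} (hz : z ∈ Set.Ioo (-1 : ℝ) 1) : 0 < gjWeight a b c p z := by
  have hz' : z ∈ Set.Icc (-1:ℝ) 1 := Set.mem_Icc.2 ⟨hz.1.le, hz.2.le⟩
  unfold gjWeight
  apply mul_pos (mul_pos (Real.rpow_pos_of_pos (by linarith [hz.2]) _)
    (Real.rpow_pos_of_pos (by linarith [hz.1]) _))
  exact Finset.prod_pos fun i _ => Real.rpow_pos_of_pos (hp i z hz') _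

lemma ibp (ha : -1 < a) (hb : -1 < b)
    (hp : ∀ i, ∀ z ∈ Set.Icc (-1 : ℝ) 1, 0 < (p i).eval z)
    {ρ ρhat : Polynomial ℝ} (hρ : ρ = ∏ i, p i)
    (hρhat : ρhat = ∑ i, Polynomial.C (c i) * Polynomial.derivative (p i) *
      ∏ l ∈ Finset.univ.erase i, p l)
    (f g : Polynomial ℝ)
    (hint1 : IntegrableOn (fun z => gjWeight (a+1) (b+1) (fun i => c i - 1) p z *
      ((ρ * derivative f + ρhat * f).eval z) * g.eval z) (Set.Ioo (-1:ℝ) 1))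
    (hint2 : IntegrableOn (fun z => gjWeight a b c p z *
      (((C (b-a) - C (a+b+2) * X) * g + (1 - X^2) * derivative g).eval z) * f.eval z)
      (Set.Ioo (-1:ℝ) 1)) :
    (∫ z in Set.Ioo (-1:ℝ) 1, gjWeight (a+1) (b+1) (fun i => c i - 1) p z *
      ((ρ * derivative f + ρhat * f).eval z) * g.eval z)
    = -∫ z in Set.Ioo (-1:ℝ) 1, gjWeight a b c p z *
      (((C (b-a) - C (a+b+2) * X) * g + (1 - X^2) * derivative g).eval z) * f.eval z := by
  set I1 : ℝ → ℝ := fun z => gjWeight (a+1) (b+1) (fun i => c i - 1) p z *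
      ((ρ * derivative f + ρhat * f).eval z) * g.eval z with hI1
  set I2 : ℝ → ℝ := fun z => gjWeight a b c p z *
      (((C (b-a) - C (a+b+2) * X) * g + (1 - X^2) * derivative g).eval z) * f.eval z with hI2
  set F : ℝ → ℝ := fun z => (1-z)^(a+1) * (1+z)^(b+1) * (∏ i, (p i).eval z ^ (c i)) *
      (f*g).eval z with hF
  -- derivative of F is I1 + I2 on the open interval
  have hder : ∀ z ∈ Set.Ioo (-1:ℝ) 1, HasDerivAt F (I1 z + I2 z) z := by
    intro z hz
    have hz1 : (0:ℝ) < 1 - z := by linarith [hz.2]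
    have hz2 : (0:ℝ) < 1 + z := by linarith [hz.1]
    have hzicc : z ∈ Set.Icc (-1:ℝ) 1 := Set.mem_Icc.2 ⟨hz.1.le, hz.2.le⟩
    have hpz : ∀ i, 0 < (p i).eval z := fun i => hp i z hzicc
    -- factor A
    have hbase1 : HasDerivAt (fun y : ℝ => 1 - y) (-1) z := by
      simpa using (hasDerivAt_id z).const_sub 1
    have hA : HasDerivAt (fun y : ℝ => (1-y)^(a+1)) (-((a+1) * (1-z)^a)) z := by
      have h := (Real.hasDerivAt_rpow_const (x := 1-z) (p := a+1) (Or.inl hz1.ne')).comp z hbase1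
      simp only [Function.comp_def] at h
      exact h.congr_deriv (by rw [add_sub_cancel_right]; ring)
    have hbase2 : HasDerivAt (fun y : ℝ => 1 + y) 1 z := by
      simpa using (hasDerivAt_id z).const_add 1
    have hB : HasDerivAt (fun y : ℝ => (1+y)^(b+1)) ((b+1) * (1+z)^b) z := by
      have h := (Real.hasDerivAt_rpow_const (x := 1+z) (p := b+1) (Or.inl hz2.ne')).comp z hbase2
      simp only [Function.comp_def] at h
      exact h.congr_deriv (by rw [add_sub_cancel_right]; ring)
    have hQ : HasDerivAt (fun y : ℝ => ∏ i, (p i).eval y ^ (c i))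
        (∑ i, (∏ j ∈ Finset.univ.erase i, (p j).eval z ^ (c j)) *
          (c i * (p i).eval z ^ (c i - 1) * (derivative (p i)).eval z)) z := by
      have hfac : ∀ i ∈ Finset.univ, HasDerivAt (fun y : ℝ => (p i).eval y ^ (c i))
          (c i * (p i).eval z ^ (c i - 1) * (derivative (p i)).eval z) z := by
        intro i _
        have h2 := (Real.hasDerivAt_rpow_const (x := (p i).eval z) (p := c i)
          (Or.inl (hpz i).ne')).comp z ((p i).hasDerivAt z)
        simp only [Function.comp_def] at h2
        convert h2 using 1 <;> ring
      have h := HasDerivAt.fun_finsetProd hfac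
      simpa [smul_eq_mul] using h
    have hE : HasDerivAt (fun y : ℝ => (f*g).eval y) ((derivative (f*g)).eval z) z :=
      (f*g).hasDerivAt z
    have hFder := ((hA.mul hB).mul hQ).mul hE
    refine hFder.congr_deriv ?_
    -- now the pointwise algebra
    have fA : (1-z)^(a+1) = (1-z)^a * (1-z) := Real.rpow_add_one hz1.ne' a
    have fB : (1+z)^(b+1) = (1+z)^b * (1+z) := Real.rpow_add_one hz2.ne' b
    have fQ : (∏ i, (p i).eval z ^ (c i)) = (∏ i, (p i).eval z ^ (c i - 1)) * ρ.eval z := by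
      rw [hρ, eval_prod, ← Finset.prod_mul_distrib]
      exact Finset.prod_congr rfl fun i _ => by
        rw [← Real.rpow_add_one (hpz i).ne', sub_add_cancel]
    have fQ' : (∑ i, (∏ j ∈ Finset.univ.erase i, (p j).eval z ^ (c j)) *
          (c i * (p i).eval z ^ (c i - 1) * (derivative (p i)).eval z))
        = (∏ i, (p i).eval z ^ (c i - 1)) * ρhat.eval z := by
      rw [hρhat, eval_finset_sum, Finset.mul_sum]
      refine Finset.sum_congr rfl fun i _ => ?_
      rw [eval_mul, eval_mul, eval_C, eval_prod]
      have e1 : (∏ j ∈ Finset.univ.erase i, (p j).eval z ^ (c j))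
          = (∏ j ∈ Finset.univ.erase i, (p j).eval z ^ (c j - 1)) *
            (∏ j ∈ Finset.univ.erase i, (p j).eval z) := by
        rw [← Finset.prod_mul_distrib]
        exact Finset.prod_congr rfl fun j _ => by
          rw [← Real.rpow_add_one (hp j z hzicc).ne', sub_add_cancel]
      have e2 : (∏ j, (p j).eval z ^ (c j - 1))
          = (p i).eval z ^ (c i - 1) * ∏ j ∈ Finset.univ.erase i, (p j).eval z ^ (c j - 1) :=
        (Finset.mul_prod_erase Finset.univ _ (Finset.mem_univ i)).symm
      rw [e1, e2]
      ring
    simp only [hI1, hI2, gjWeight, Pi.mul_apply]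
    rw [fQ', fQ, fA, fB]
    simp only [derivative_mul, eval_add, eval_mul, eval_sub, eval_one, eval_pow, eval_X, eval_C]
    ring
  -- integrability of the sum
  have hintG : IntegrableOn (fun z => I1 z + I2 z) (Set.Ioo (-1:ℝ) 1) := hint1.add hint2
  -- boundary limits
  have htendA : Filter.Tendsto F (nhdsWithin (-1:ℝ) (Set.Ioi (-1:ℝ))) (nhds 0) := by
    have hc : ContinuousAt F (-1) := by
      refine (ContinuousAt.mul (ContinuousAt.mul ?_ ?_) ?_).mul ((f*g).continuous.continuousAt)
      · exact ContinuousAt.rpow_const (by fun_prop) (Or.inl (by norm_num))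
      · exact ContinuousAt.rpow_const (by fun_prop) (Or.inr (by linarith))
      · apply tendsto_finset_prod
        intro i _
        exact ContinuousAt.rpow_const ((p i).continuous.continuousAt)
          (Or.inl (hp i (-1) (by norm_num)).ne')
    have hval : F (-1) = 0 := by
      simp only [hF]
      rw [show (1:ℝ) + (-1) = 0 by norm_num, Real.zero_rpow (by linarith : b + 1 ≠ 0)]
      ring
    rw [← hval]
    exact hc.continuousWithinAt.tendsto
  have htendB : Filter.Tendsto F (nhdsWithin (1:ℝ) (Set.Iio (1:ℝ))) (nhds 0) := by
    have hc : ContinuousAt F 1 := by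
      refine (ContinuousAt.mul (ContinuousAt.mul ?_ ?_) ?_).mul ((f*g).continuous.continuousAt)
      · exact ContinuousAt.rpow_const (by fun_prop) (Or.inr (by linarith))
      · exact ContinuousAt.rpow_const (by fun_prop) (Or.inl (by norm_num))
      · apply tendsto_finset_prod
        intro i _
        exact ContinuousAt.rpow_const ((p i).continuous.continuousAt)
          (Or.inl (hp i 1 (by norm_num)).ne')
    have hval : F 1 = 0 := by
      simp only [hF]
      rw [show (1:ℝ) - 1 = 0 by norm_num, Real.zero_rpow (by linarith : a + 1 ≠ 0)]
      ring
    rw [← hval]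
    exact hc.continuousWithinAt.tendsto
  -- FTC
  have h0 : (∫ z in (-1:ℝ)..1, (I1 z + I2 z)) = 0 - 0 :=
    intervalIntegral.integral_eq_sub_of_hasDerivAt_of_tendsto (by norm_num) hder
      ((intervalIntegrable_iff_integrableOn_Ioo_of_le (by norm_num)).2 hintG) htendA htendB
  rw [intervalIntegral.integral_of_le (by norm_num : (-1:ℝ) ≤ 1),
    MeasureTheory.integral_Ioc_eq_integral_Ioo, sub_zero] at h0
  rw [MeasureTheory.integral_add hint1 hint2] at h0
  linarith

lemma rhohat_deg (hpne : ∀ i, p i ≠ 0)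
    {ρ ρhat : Polynomial ℝ} (hρ : ρ = ∏ i, p i)
    (hρhat : ρhat = ∑ i, Polynomial.C (c i) * Polynomial.derivative (p i) *
      ∏ l ∈ Finset.univ.erase i, p l) :
    ρhat.natDegree ≤ ρ.natDegree - 1 ∧ (ρ.natDegree = 0 → ρhat = 0) := by
  have hsum : ρ.natDegree = ∑ i, (p i).natDegree := by
    rw [hρ]; exact Polynomial.natDegree_prod _ _ fun i _ => hpne i
  constructor
  · rw [hρhat]
    apply Polynomial.natDegree_sum_le_of_forall_le
    intro i _
    rcases Nat.eq_zero_or_pos (p i).natDegree with hd0 | hdpos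
    · rw [Polynomial.derivative_of_natDegree_zero hd0]
      simp
    · refine le_trans (Polynomial.natDegree_mul_le) ?_
      have h1 : (Polynomial.C (c i) * Polynomial.derivative (p i)).natDegree ≤
          (p i).natDegree - 1 :=
        le_trans Polynomial.natDegree_mul_le
          (by simpa using Polynomial.natDegree_derivative_le (p i))
      have h2 : (∏ l ∈ Finset.univ.erase i, p l).natDegree =
          ∑ l ∈ Finset.univ.erase i, (p l).natDegree :=
        Polynomial.natDegree_prod _ _ fun l _ => hpne l
      have h3 : (p i).natDegree + ∑ l ∈ Finset.univ.erase i, (p l).natDegree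
          = ρ.natDegree := by
        rw [hsum]
        exact Finset.add_sum_erase Finset.univ (fun l => (p l).natDegree) (Finset.mem_univ i)
      omega
  · intro h0
    rw [hρhat]
    apply Finset.sum_eq_zero
    intro i _
    have : (p i).natDegree = 0 := by
      have h4 : (p i).natDegree ≤ ∑ l, (p l).natDegree := by
        simpa using Finset.single_le_sum (f := fun i => (p i).natDegree)
          (fun i _ => Nat.zero_le _) (Finset.mem_univ i)
      omega
    rw [Polynomial.derivative_of_natDegree_zero this]
    simp

lemma part1 (hpne : ∀ i, p i ≠ 0)
    {ρ ρhat : Polynomial ℝ} (hρ : ρ = ∏ i, p i)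
    (hρhat : ρhat = ∑ i, Polynomial.C (c i) * Polynomial.derivative (p i) *
      ∏ l ∈ Finset.univ.erase i, p l)
    (f : Polynomial ℝ) :
    (ρ * Polynomial.derivative f + ρhat * f).natDegree ≤ f.natDegree + ρ.natDegree - 1 := by
  obtain ⟨hd, h0⟩ := rhohat_deg hpne hρ hρhat
  set D := ρ.natDegree
  refine le_trans (Polynomial.natDegree_add_le _ _) (max_le ?_ ?_)
  · rcases eq_or_ne (Polynomial.derivative f) 0 with hf0 | hf0
    · simp [hf0]
    · have hf1 : 1 ≤ f.natDegree := by
        by_contra hcon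
        exact hf0 (Polynomial.derivative_of_natDegree_zero (by omega))
      have := Polynomial.natDegree_derivative_le f
      refine le_trans Polynomial.natDegree_mul_le ?_
      omega
  · rcases Nat.eq_zero_or_pos D with hD0 | hDpos
    · simp [h0 hD0]
    · refine le_trans Polynomial.natDegree_mul_le ?_
      omega


end GJ9

/-- The operator `L f = ρ f' + ρ̂ f` (with `ρ = ∏ᵢ pᵢ`, `ρ̂ = Σᵢ cᵢ pᵢ' ∏_{l≠i} p_l`)
maps degree-`n` polynomials to degree at most `n+D-1` and is banded with bandwidth `D+1`
from the `(a,b,c)` basis to the `(a+1,b+1,c-1⃗)` basis, where `D = deg ρ`:  its matrix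
entries vanish unless `n-1 ≤ m ≤ n-1+D`. -/
theorem statement9 (a b : ℝ) (ha : -1 < a) (hb : -1 < b) (N : ℕ) (c : Fin N → ℝ)
    (p : Fin N → Polynomial ℝ) (hp : ∀ i, ∀ z ∈ Set.Icc (-1 : ℝ) 1, 0 < (p i).eval z)
    (P P' : ℕ → Polynomial ℝ)
    (hP : IsONPolys (gjWeight a b c p) P)
    (hP' : IsONPolys (gjWeight (a + 1) (b + 1) (fun i => c i - 1) p) P')
    (ρ ρhat : Polynomial ℝ)
    (hρ : ρ = ∏ i, p i)
    (hρhat : ρhat = ∑ i, Polynomial.C (c i) * Polynomial.derivative (p i) *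
      ∏ l ∈ Finset.univ.erase i, p l)
    (D : ℕ) (hD : D = ρ.natDegree)
    (L : Polynomial ℝ → Polynomial ℝ)
    (hL : ∀ f, L f = ρ * Polynomial.derivative f + ρhat * f) :
    (∀ f : Polynomial ℝ, (L f).natDegree ≤ f.natDegree + D - 1) ∧
    ∀ n m : ℕ, ¬(n ≤ m + 1 ∧ m + 1 ≤ n + D) →
      (∫ z in Set.Ioo (-1 : ℝ) 1,
        gjWeight (a + 1) (b + 1) (fun i => c i - 1) p z
          * (L (P n)).eval z * (P' m).eval z) = 0 := by
  have hpne : ∀ i, p i ≠ 0 := fun i h0 => by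
    have := hp i 0 (by norm_num)
    rw [h0] at this
    simp at this
  constructor
  · intro f
    rw [hL f, hD]
    exact GJ9.part1 hpne hρ hρhat f
  · intro n m hnm
    have hwc : ContinuousOn (gjWeight a b c p) (Set.Ioo (-1:ℝ) 1) := GJ9.gj_contOn hp
    have hWc : ContinuousOn (gjWeight (a+1) (b+1) (fun i => c i - 1) p) (Set.Ioo (-1:ℝ) 1) :=
      GJ9.gj_contOn hp
    have hw0 : ∀ z ∈ Set.Ioo (-1:ℝ) 1, 0 ≤ gjWeight a b c p z :=
      fun z hz => (GJ9.gj_pos hp hz).le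
    have hW0 : ∀ z ∈ Set.Ioo (-1:ℝ) 1, 0 ≤ gjWeight (a+1) (b+1) (fun i => c i - 1) p z :=
      fun z hz => (GJ9.gj_pos hp hz).le
    rcases (by omega : m + 2 ≤ n ∨ n + D ≤ m) with hcase | hcase
    · -- lower band edge: integrate by parts
      rw [hL (P n)]
      have hint1 := GJ9.integrable_poly2 hP' hWc hW0
        (ρ * Polynomial.derivative (P n) + ρhat * P n) (P' m)
      have hint2 := GJ9.integrable_poly2 hP hwc hw0
        ((Polynomial.C (b-a) - Polynomial.C (a+b+2) * Polynomial.X) * P' m +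
          (1 - Polynomial.X^2) * Polynomial.derivative (P' m)) (P n)
      rw [GJ9.ibp ha hb hp hρ hρhat (P n) (P' m) hint1 hint2]
      have hdg : (P' m).natDegree = m := GJ9.natDeg hP' m
      have hs : (Polynomial.C (b-a) - Polynomial.C (a+b+2) * Polynomial.X).natDegree ≤ 1 :=
        le_trans (Polynomial.natDegree_sub_le _ _) (max_le (by simp)
          (le_trans (Polynomial.natDegree_C_mul_le _ _) Polynomial.natDegree_X_le))
      have h1 : ((Polynomial.C (b-a) - Polynomial.C (a+b+2) * Polynomial.X) * P' m).natDegree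
          ≤ m + 1 := by
        refine le_trans Polynomial.natDegree_mul_le ?_
        rw [hdg]; omega
      have h2 : (((1 : Polynomial ℝ) - Polynomial.X^2) *
          Polynomial.derivative (P' m)).natDegree ≤ m + 1 := by
        by_cases hm : m = 0
        · have hz : Polynomial.derivative (P' m) = 0 :=
            Polynomial.derivative_of_natDegree_zero (by rw [hdg, hm])
          simp [hz]
        · have hd' := Polynomial.natDegree_derivative_le (P' m)
          rw [hdg] at hd'
          have hτ : ((1 : Polynomial ℝ) - Polynomial.X^2).natDegree ≤ 2 :=
            le_trans (Polynomial.natDegree_sub_le _ _)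
              (max_le (by simp) (by simp [Polynomial.natDegree_X_pow]))
          refine le_trans Polynomial.natDegree_mul_le ?_
          omega
      have hdeg : ((Polynomial.C (b-a) - Polynomial.C (a+b+2) * Polynomial.X) * P' m +
          (1 - Polynomial.X^2) * Polynomial.derivative (P' m)).natDegree < n :=
        lt_of_le_of_lt (le_trans (Polynomial.natDegree_add_le _ _) (max_le h1 h2)) (by omega)
      rw [GJ9.orth hP hwc hw0 _ n hdeg, neg_zero]
    · -- upper band edge: degree counting
      by_cases hLz : L (P n) = 0
      · simp [hLz]
      · have hdeg : (L (P n)).natDegree < m := by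
          have h := GJ9.part1 hpne hρ hρhat (P n)
          rw [← hL, ← hD, GJ9.natDeg hP n] at h
          rcases Nat.eq_zero_or_pos (n + D) with h0 | hpos
          · exfalso
            apply hLz
            rw [hL]
            have hρ0 : ρ.natDegree = 0 := by omega
            have hd0 : Polynomial.derivative (P n) = 0 :=
              Polynomial.derivative_of_natDegree_zero
                (by rw [GJ9.natDeg hP n]; omega)
            rw [(GJ9.rhohat_deg hpne hρ hρhat).2 hρ0, hd0]
            simp
          · omega
        exact GJ9.orth hP' hWc hW0 (L (P n)) m hdeg
end

section
/- The cylinder gyroscopic basis functions are orthonormal with respect to the weighted measure dμ(α): for all integers m, m′ with |m|+σ ≥ 0 and |m′|+σ ≥ 0 and all l, l′, k, k′ ∈ ℕ, ⟨Φ_{m,l,k}^{(α,σ)}, Φ_{m′,l′,k′}^{(α,σ)}⟩_{dμ(α)} = δ_{mm′} δ_{ll′} δ_{kk′}. -/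
open MeasureTheory Polynomial

/-- Orthonormality of the cylinder gyroscopic basis functions
`Φ_{m,l,k}^{(α,σ)}(t,φ,η) = e^{imφ} (1+t)^{(|m|+σ)/2} h̃(t)^l P_l^{(α,α)}(η)
Q_k^{(α,|m|+σ,2l+2α+1)}(t)` with respect to the weighted measure `dμ(α)`. -/
theorem statement11
    (h : Polynomial ℝ) (hpos : ∀ t ∈ Set.Icc (-1 : ℝ) 1, 0 < h.eval t)
    (α : ℝ) (hα : -1 < α) (σ : ℤ) (hσ : σ = -1 ∨ σ = 0 ∨ σ = 1)
    (P : ℕ → Polynomial ℝ)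
    (hPdeg : ∀ l, (P l).degree = l) (hPlead : ∀ l, 0 < (P l).leadingCoeff)
    (hPorth : ∀ l l', (∫ η in Set.Ioo (-1 : ℝ) 1,
        (1 - η ^ 2) ^ α * (P l).eval η * (P l').eval η)
      = if l = l' then (1 : ℝ) else 0)
    (Q : ℤ → ℕ → ℕ → Polynomial ℝ)
    (hQdeg : ∀ m l k, (Q m l k).degree = k) (hQlead : ∀ m l k, 0 < (Q m l k).leadingCoeff)
    (hQorth : ∀ m : ℤ, 0 ≤ |m| + σ → ∀ l j k : ℕ,
      (∫ t in Set.Ioo (-1 : ℝ) 1,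
        (1 - t) ^ α * (1 + t) ^ ((|m| + σ : ℤ) : ℝ) * h.eval t ^ (2 * (l : ℝ) + 2 * α + 1)
          * (Q m l j).eval t * (Q m l k).eval t)
      = if j = k then (1 : ℝ) else 0)
    (Φ : ℤ → ℕ → ℕ → ℝ → ℝ → ℝ → ℂ)
    (hΦ : ∀ m l k t φ η, Φ m l k t φ η =
      Complex.exp (Complex.I * m * φ) *
        (((1 + t) ^ (((|m| + σ : ℤ) : ℝ) / 2) * h.eval t ^ l
          * (P l).eval η * (Q m l k).eval t : ℝ) : ℂ)) :
    ∀ m m' : ℤ, 0 ≤ |m| + σ → 0 ≤ |m'| + σ → ∀ l l' k k' : ℕ,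
      (2 * Real.pi : ℂ)⁻¹ *
        (∫ t in Set.Ioo (-1 : ℝ) 1, ∫ η in Set.Ioo (-1 : ℝ) 1,
          ∫ φ in Set.Ico (0 : ℝ) (2 * Real.pi),
            (((1 - η ^ 2) ^ α * (1 - t) ^ α * h.eval t ^ (2 * α + 1) : ℝ) : ℂ)
              * (starRingEnd ℂ) (Φ m l k t φ η) * Φ m' l' k' t φ η)
      = if m = m' ∧ l = l' ∧ k = k' then (1 : ℂ) else 0 := by
  intro m m' hm hm' l l' k k'
  have h2π : (0:ℝ) < 2 * Real.pi := by positivity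
  -- the φ-integral of a complex exponential
  have hexp : ∀ n : ℤ, (∫ φ in Set.Ico (0:ℝ) (2*Real.pi), Complex.exp (Complex.I * n * φ))
      = if n = 0 then (2*Real.pi : ℂ) else 0 := by
    intro n
    rw [integral_Ico_eq_integral_Ioo, ← integral_Ioc_eq_integral_Ioo,
      ← intervalIntegral.integral_of_le h2π.le]
    by_cases hn : n = 0
    · simp [hn]
    · rw [if_neg hn]
      have hc : (Complex.I * n) ≠ 0 := by simp [Complex.I_ne_zero, hn]
      rw [integral_exp_mul_complex hc]
      have : Complex.exp (Complex.I * n * (2*(Real.pi:ℂ))) = 1 := by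
        rw [show Complex.I * (n:ℂ) * (2*(Real.pi:ℂ)) = (n:ℂ) * (2 * Real.pi * Complex.I) by ring]
        exact Complex.exp_int_mul_two_pi_mul_I n
      simp [this]
  -- the real part of the integrand
  set W : ℝ → ℝ → ℝ := fun t η =>
    ((1 - η ^ 2) ^ α * (1 - t) ^ α * h.eval t ^ (2 * α + 1)) *
      ((1 + t) ^ (((|m| + σ : ℤ) : ℝ) / 2) * h.eval t ^ l
          * (P l).eval η * (Q m l k).eval t) *
      ((1 + t) ^ (((|m'| + σ : ℤ) : ℝ) / 2) * h.eval t ^ l'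
          * (P l').eval η * (Q m' l' k').eval t) with hW
  -- inner (φ) integral
  have key : ∀ t η : ℝ, (∫ φ in Set.Ico (0:ℝ) (2*Real.pi),
      (((1 - η ^ 2) ^ α * (1 - t) ^ α * h.eval t ^ (2 * α + 1) : ℝ) : ℂ)
        * (starRingEnd ℂ) (Φ m l k t φ η) * Φ m' l' k' t φ η)
      = (if m' - m = 0 then (2*Real.pi : ℂ) else 0) * ((W t η : ℝ) : ℂ) := by
    intro t η
    have ptwise : ∀ φ : ℝ,
        (((1 - η ^ 2) ^ α * (1 - t) ^ α * h.eval t ^ (2 * α + 1) : ℝ) : ℂ)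
          * (starRingEnd ℂ) (Φ m l k t φ η) * Φ m' l' k' t φ η
        = Complex.exp (Complex.I * ((m' - m : ℤ)) * φ) * ((W t η : ℝ) : ℂ) := by
      intro φ
      rw [hΦ, hΦ]
      rw [map_mul, Complex.conj_ofReal]
      have e1 : (starRingEnd ℂ) (Complex.exp (Complex.I * m * φ)) *
          Complex.exp (Complex.I * m' * φ) = Complex.exp (Complex.I * ((m' - m : ℤ)) * φ) := by
        rw [← Complex.exp_conj, ← Complex.exp_add]
        congr 1
        simp only [map_mul, Complex.conj_I, map_intCast, Complex.conj_ofReal]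
        push_cast
        ring
      calc _ = ((starRingEnd ℂ) (Complex.exp (Complex.I * m * φ)) *
            Complex.exp (Complex.I * m' * φ)) * ((W t η : ℝ) : ℂ) := by
              rw [hW]; push_cast; ring
        _ = _ := by rw [e1]
    simp_rw [ptwise]
    rw [integral_mul_const, hexp]
  simp_rw [key]
  by_cases hmm : m = m'
  · subst hmm
    rw [if_pos (sub_self m)]
    -- the t-dependent factor
    set C : ℝ → ℝ := fun t =>
      ((1 - t) ^ α * h.eval t ^ (2 * α + 1)) *
        ((1 + t) ^ (((|m| + σ : ℤ) : ℝ) / 2) * (1 + t) ^ (((|m| + σ : ℤ) : ℝ) / 2)) *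
        (h.eval t ^ l * h.eval t ^ l') *
        ((Q m l k).eval t * (Q m l' k').eval t) with hC
    -- η integral
    have keyη : ∀ t : ℝ, (∫ η in Set.Ioo (-1:ℝ) 1, (2*Real.pi : ℂ) * ((W t η : ℝ) : ℂ))
        = (2*Real.pi : ℂ) * (((if l = l' then (1:ℝ) else 0) * C t : ℝ) : ℂ) := by
      intro t
      rw [integral_const_mul]
      congr 1
      rw [show (∫ η in Set.Ioo (-1:ℝ) 1, ((W t η : ℝ) : ℂ))
          = ((∫ η in Set.Ioo (-1:ℝ) 1, W t η : ℝ) : ℂ) from integral_ofReal]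
      rw [Complex.ofReal_inj]
      have : ∀ η : ℝ, W t η = C t * ((1 - η ^ 2) ^ α * (P l).eval η * (P l').eval η) := by
        intro η; rw [hW, hC]; ring
      simp_rw [this]
      rw [integral_const_mul, hPorth l l']
      ring
    simp_rw [keyη]
    by_cases hll : l = l'
    · subst hll
      rw [if_pos rfl]
      -- t integral
      have keyt : (∫ t in Set.Ioo (-1:ℝ) 1, C t) = if k = k' then (1:ℝ) else 0 := by
        rw [← hQorth m hm l k k']
        apply setIntegral_congr_fun measurableSet_Ioo
        intro t ht
        obtain ⟨ht1, ht2⟩ := ht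
        have h1t : (0:ℝ) < 1 + t := by linarith
        have hht : 0 < h.eval t := hpos t ⟨le_of_lt ht1, le_of_lt ht2⟩
        have e2 : (1 + t) ^ (((|m| + σ : ℤ) : ℝ) / 2) * (1 + t) ^ (((|m| + σ : ℤ) : ℝ) / 2)
            = (1 + t) ^ ((|m| + σ : ℤ) : ℝ) := by
          rw [← Real.rpow_add h1t]; ring_nf
        have e3 : h.eval t ^ (2 * α + 1) * (h.eval t ^ l * h.eval t ^ l)
            = h.eval t ^ (2 * (l : ℝ) + 2 * α + 1) := by
          rw [← Real.rpow_natCast (h.eval t) l, ← Real.rpow_add hht, ← Real.rpow_add hht]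
          ring_nf
        rw [hC]
        dsimp only
        rw [show ((1 - t) ^ α * h.eval t ^ (2 * α + 1)) *
            ((1 + t) ^ (((|m| + σ : ℤ) : ℝ) / 2) * (1 + t) ^ (((|m| + σ : ℤ) : ℝ) / 2)) *
            (h.eval t ^ l * h.eval t ^ l) * ((Q m l k).eval t * (Q m l k').eval t)
          = (1 - t) ^ α *
            ((1 + t) ^ (((|m| + σ : ℤ) : ℝ) / 2) * (1 + t) ^ (((|m| + σ : ℤ) : ℝ) / 2)) *
            (h.eval t ^ (2 * α + 1) * (h.eval t ^ l * h.eval t ^ l)) *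
            (Q m l k).eval t * (Q m l k').eval t by ring]
        rw [e2, e3]
      simp only [one_mul]
      rw [integral_const_mul]
      rw [show (∫ t in Set.Ioo (-1:ℝ) 1, ((C t : ℝ) : ℂ))
          = ((∫ t in Set.Ioo (-1:ℝ) 1, C t : ℝ) : ℂ) from integral_ofReal]
      rw [keyt]
      have hne : (2 * (Real.pi:ℂ)) ≠ 0 := by
        simp [Real.pi_ne_zero, Complex.ofReal_ne_zero]
      by_cases hkk : k = k'
      · simp only [hkk, if_pos rfl, and_true, true_and, if_pos rfl]
        push_cast
        rw [show ((2:ℂ) * Real.pi)⁻¹ * (2 * Real.pi * 1) = (2 * Real.pi) * (2 * (Real.pi:ℂ))⁻¹ by ring,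
          mul_inv_cancel₀ hne]
      · simp [hkk]
    · rw [if_neg hll, if_neg (by simp [hll])]
      simp
  · rw [if_neg (sub_ne_zero_of_ne fun e => hmm e.symm), if_neg (by simp [hmm])]
    simp
end

section
/- The annulus gyroscopic basis functions are orthonormal with respect to the weighted measure dμ(α): for all integers m, m′ with |m|+σ ≥ 0 and |m′|+σ ≥ 0 and all l, l′, k, k′ ∈ ℕ, ⟨Υ_{m,l,k}^{(α,σ)}, Υ_{m′,l′,k′}^{(α,σ)}⟩_{dμ(α)} = δ_{mm′} δ_{ll′} δ_{kk′}. -/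
open MeasureTheory Polynomial

lemma expIntAux (n : ℤ) :
    (∫ φ in Set.Ico (0:ℝ) (2*Real.pi), Complex.exp (Complex.I * n * φ))
      = if n = 0 then ((2*Real.pi : ℝ) : ℂ) else 0 := by
  rw [MeasureTheory.integral_Ico_eq_integral_Ioo, ← MeasureTheory.integral_Ioc_eq_integral_Ioo,
    ← intervalIntegral.integral_of_le (by positivity : (0:ℝ) ≤ 2*Real.pi)]
  by_cases hn : n = 0
  · simp [hn, Complex.ofReal_mul]
  · rw [if_neg hn]
    have hc : (Complex.I * (n:ℂ)) ≠ 0 := by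
      simp [Complex.I_ne_zero, hn]
    rw [integral_exp_mul_complex hc]
    have h1 : Complex.I * (n:ℂ) * ((2*Real.pi : ℝ):ℂ) = (n:ℂ) * (2 * Real.pi * Complex.I) := by
      push_cast; ring
    rw [h1, Complex.exp_int_mul_two_pi_mul_I]
    simp

lemma constIntAux (c : ℂ) :
    (∫ _ in Set.Ico (0:ℝ) (2*Real.pi), c) = ((2*Real.pi : ℝ) : ℂ) * c := by
  rw [MeasureTheory.setIntegral_const, measureReal_def, Real.volume_Ico]
  rw [show (2*Real.pi - 0 : ℝ) = 2*Real.pi by ring,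
    ENNReal.toReal_ofReal (by positivity), Complex.real_smul]

lemma conjExpAux (m : ℤ) (φ : ℝ) :
    (starRingEnd ℂ) (Complex.exp (Complex.I * m * φ))
      = Complex.exp (-(Complex.I * m * φ)) := by
  rw [← Complex.exp_conj]
  congr 1
  simp [map_mul, Complex.conj_I, Complex.conj_ofReal]

/-- Orthonormality of the annulus gyroscopic basis functions
`Υ_{m,l,k}^{(α,σ)}(t,φ,η) = e^{imφ} (s̃²(t))^{(|m|+σ)/2} h̃(t)^l P_l^{(α,α)}(η)
Q_k^{(α,2l+2α+1,|m|+σ)}(t)` with respect to the weighted measure `dμ(α)`, where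
`s̃²(t) = S_i²(1-t) + S_o²(1+t)`. -/
theorem statement12
    (h : Polynomial ℝ) (hpos : ∀ t ∈ Set.Icc (-1 : ℝ) 1, 0 < h.eval t)
    (Si So : ℝ) (hSi : 0 < Si) (hSiSo : Si < So)
    (α : ℝ) (hα : -1 < α) (σ : ℤ) (hσ : σ = -1 ∨ σ = 0 ∨ σ = 1)
    (s2 : ℝ → ℝ) (hs2 : ∀ t, s2 t = Si ^ 2 * (1 - t) + So ^ 2 * (1 + t))
    (P : ℕ → Polynomial ℝ)
    (hPdeg : ∀ l, (P l).degree = l) (hPlead : ∀ l, 0 < (P l).leadingCoeff)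
    (hPorth : ∀ l l', (∫ η in Set.Ioo (-1 : ℝ) 1,
        (1 - η ^ 2) ^ α * (P l).eval η * (P l').eval η)
      = if l = l' then (1 : ℝ) else 0)
    (Q : ℤ → ℕ → ℕ → Polynomial ℝ)
    (hQdeg : ∀ m l k, (Q m l k).degree = k) (hQlead : ∀ m l k, 0 < (Q m l k).leadingCoeff)
    (hQorth : ∀ m : ℤ, 0 ≤ |m| + σ → ∀ l j k : ℕ,
      (∫ t in Set.Ioo (-1 : ℝ) 1,
        (1 - t) ^ α * (1 + t) ^ α * h.eval t ^ (2 * (l : ℝ) + 2 * α + 1)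
          * s2 t ^ ((|m| + σ : ℤ) : ℝ)
          * (Q m l j).eval t * (Q m l k).eval t)
      = if j = k then (1 : ℝ) else 0)
    (Υ : ℤ → ℕ → ℕ → ℝ → ℝ → ℝ → ℂ)
    (hΥ : ∀ m l k t φ η, Υ m l k t φ η =
      Complex.exp (Complex.I * m * φ) *
        ((s2 t ^ (((|m| + σ : ℤ) : ℝ) / 2) * h.eval t ^ l
          * (P l).eval η * (Q m l k).eval t : ℝ) : ℂ)) :
    ∀ m m' : ℤ, 0 ≤ |m| + σ → 0 ≤ |m'| + σ → ∀ l l' k k' : ℕ,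
      (2 * Real.pi : ℂ)⁻¹ *
        (∫ t in Set.Ioo (-1 : ℝ) 1, ∫ η in Set.Ioo (-1 : ℝ) 1,
          ∫ φ in Set.Ico (0 : ℝ) (2 * Real.pi),
            (((1 - η ^ 2) ^ α * (1 - t ^ 2) ^ α * h.eval t ^ (2 * α + 1) : ℝ) : ℂ)
              * (starRingEnd ℂ) (Υ m l k t φ η) * Υ m' l' k' t φ η)
      = if m = m' ∧ l = l' ∧ k = k' then (1 : ℂ) else 0 := by
  intro m m' hm hm' l l' k k'
  have hπ : ((2*Real.pi : ℝ) : ℂ) = (2 * Real.pi : ℂ) := by push_cast; ring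
  have hπ0 : (2 * Real.pi : ℂ) ≠ 0 := by
    simp [Real.pi_ne_zero, Complex.ofReal_ne_zero]
  by_cases hmm : m = m'
  · subst hmm
    -- pointwise: integrand is a real-valued constant in φ
    have hpt : ∀ t φ η : ℝ,
        (((1 - η ^ 2) ^ α * (1 - t ^ 2) ^ α * h.eval t ^ (2 * α + 1) : ℝ) : ℂ)
            * (starRingEnd ℂ) (Υ m l k t φ η) * Υ m l' k' t φ η
        = ((((1 - η ^ 2) ^ α * (P l).eval η * (P l').eval η) *
            ((1 - t ^ 2) ^ α * h.eval t ^ (2 * α + 1) *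
              (s2 t ^ (((|m| + σ : ℤ) : ℝ) / 2) * h.eval t ^ l * (Q m l k).eval t) *
              (s2 t ^ (((|m| + σ : ℤ) : ℝ) / 2) * h.eval t ^ l' * (Q m l' k').eval t)) : ℝ) : ℂ) := by
      intro t φ η
      rw [hΥ, hΥ, map_mul, conjExpAux, Complex.conj_ofReal]
      have hexp : Complex.exp (-(Complex.I * m * φ)) * Complex.exp (Complex.I * m * φ) = 1 := by
        rw [← Complex.exp_add, neg_add_cancel, Complex.exp_zero]
      calc (((1 - η ^ 2) ^ α * (1 - t ^ 2) ^ α * h.eval t ^ (2 * α + 1) : ℝ) : ℂ)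
            * (Complex.exp (-(Complex.I * m * φ)) *
              ((s2 t ^ (((|m| + σ : ℤ) : ℝ) / 2) * h.eval t ^ l
                * (P l).eval η * (Q m l k).eval t : ℝ) : ℂ))
            * (Complex.exp (Complex.I * m * φ) *
              ((s2 t ^ (((|m| + σ : ℤ) : ℝ) / 2) * h.eval t ^ l'
                * (P l').eval η * (Q m l' k').eval t : ℝ) : ℂ))
          = (Complex.exp (-(Complex.I * m * φ)) * Complex.exp (Complex.I * m * φ)) *
            ((((1 - η ^ 2) ^ α * (P l).eval η * (P l').eval η) *
            ((1 - t ^ 2) ^ α * h.eval t ^ (2 * α + 1) *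
              (s2 t ^ (((|m| + σ : ℤ) : ℝ) / 2) * h.eval t ^ l * (Q m l k).eval t) *
              (s2 t ^ (((|m| + σ : ℤ) : ℝ) / 2) * h.eval t ^ l' * (Q m l' k').eval t)) : ℝ) : ℂ) := by
            push_cast; ring
        _ = _ := by rw [hexp, one_mul]
    simp only [hpt]
    have h1 : ∀ t η : ℝ,
        (∫ _ in Set.Ico (0:ℝ) (2*Real.pi),
          ((((1 - η ^ 2) ^ α * (P l).eval η * (P l').eval η) *
            ((1 - t ^ 2) ^ α * h.eval t ^ (2 * α + 1) *
              (s2 t ^ (((|m| + σ : ℤ) : ℝ) / 2) * h.eval t ^ l * (Q m l k).eval t) *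
              (s2 t ^ (((|m| + σ : ℤ) : ℝ) / 2) * h.eval t ^ l' * (Q m l' k').eval t)) : ℝ) : ℂ))
        = ((2*Real.pi : ℝ) : ℂ) *
          ((((1 - η ^ 2) ^ α * (P l).eval η * (P l').eval η) *
            ((1 - t ^ 2) ^ α * h.eval t ^ (2 * α + 1) *
              (s2 t ^ (((|m| + σ : ℤ) : ℝ) / 2) * h.eval t ^ l * (Q m l k).eval t) *
              (s2 t ^ (((|m| + σ : ℤ) : ℝ) / 2) * h.eval t ^ l' * (Q m l' k').eval t)) : ℝ) : ℂ) :=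
      fun t η => constIntAux _
    simp only [h1]
    have h2 : ∀ t : ℝ,
        (∫ η in Set.Ioo (-1:ℝ) 1, ((2*Real.pi : ℝ) : ℂ) *
          ((((1 - η ^ 2) ^ α * (P l).eval η * (P l').eval η) *
            ((1 - t ^ 2) ^ α * h.eval t ^ (2 * α + 1) *
              (s2 t ^ (((|m| + σ : ℤ) : ℝ) / 2) * h.eval t ^ l * (Q m l k).eval t) *
              (s2 t ^ (((|m| + σ : ℤ) : ℝ) / 2) * h.eval t ^ l' * (Q m l' k').eval t)) : ℝ) : ℂ))
        = ((2*Real.pi : ℝ) : ℂ) *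
          (((if l = l' then (1:ℝ) else 0) *
            ((1 - t ^ 2) ^ α * h.eval t ^ (2 * α + 1) *
              (s2 t ^ (((|m| + σ : ℤ) : ℝ) / 2) * h.eval t ^ l * (Q m l k).eval t) *
              (s2 t ^ (((|m| + σ : ℤ) : ℝ) / 2) * h.eval t ^ l' * (Q m l' k').eval t)) : ℝ) : ℂ) := by
      intro t
      rw [MeasureTheory.integral_const_mul]
      congr 1
      calc (∫ η in Set.Ioo (-1:ℝ) 1,
            ((((1 - η ^ 2) ^ α * (P l).eval η * (P l').eval η) *
            ((1 - t ^ 2) ^ α * h.eval t ^ (2 * α + 1) *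
              (s2 t ^ (((|m| + σ : ℤ) : ℝ) / 2) * h.eval t ^ l * (Q m l k).eval t) *
              (s2 t ^ (((|m| + σ : ℤ) : ℝ) / 2) * h.eval t ^ l' * (Q m l' k').eval t)) : ℝ) : ℂ))
          = ((∫ η in Set.Ioo (-1:ℝ) 1,
            (((1 - η ^ 2) ^ α * (P l).eval η * (P l').eval η) *
            ((1 - t ^ 2) ^ α * h.eval t ^ (2 * α + 1) *
              (s2 t ^ (((|m| + σ : ℤ) : ℝ) / 2) * h.eval t ^ l * (Q m l k).eval t) *
              (s2 t ^ (((|m| + σ : ℤ) : ℝ) / 2) * h.eval t ^ l' * (Q m l' k').eval t))) : ℝ) : ℂ) := integral_ofReal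
        _ = _ := by rw [MeasureTheory.integral_mul_const, hPorth]
    simp only [h2]
    by_cases hll : l = l'
    · subst hll
      simp only [eq_self_iff_true, if_true, one_mul]
      have h3 : (∫ t in Set.Ioo (-1:ℝ) 1,
          ((1 - t ^ 2) ^ α * h.eval t ^ (2 * α + 1) *
            (s2 t ^ (((|m| + σ : ℤ) : ℝ) / 2) * h.eval t ^ l * (Q m l k).eval t) *
            (s2 t ^ (((|m| + σ : ℤ) : ℝ) / 2) * h.eval t ^ l * (Q m l k').eval t)))
          = if k = k' then (1:ℝ) else 0 := by
        rw [← hQorth m hm l k k']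
        apply MeasureTheory.setIntegral_congr_fun measurableSet_Ioo
        intro t ht
        obtain ⟨ht1, ht2⟩ := ht
        have h1t : (0:ℝ) < 1 - t := by linarith
        have h2t : (0:ℝ) < 1 + t := by linarith
        have hht : 0 < h.eval t := hpos t ⟨le_of_lt ht1, le_of_lt ht2⟩
        have hst : 0 < s2 t := by
          rw [hs2]
          have := mul_pos (pow_pos hSi 2) h1t
          have := mul_pos (pow_pos (lt_trans hSi hSiSo) 2) h2t
          linarith
        have hv : ((1:ℝ) - t^2) ^ α = (1-t) ^ α * (1+t) ^ α := by
          rw [show (1:ℝ) - t^2 = (1-t)*(1+t) by ring, Real.mul_rpow h1t.le h2t.le]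
        have hs : s2 t ^ ((((|m| + σ : ℤ) : ℝ)) / 2) * s2 t ^ ((((|m| + σ : ℤ) : ℝ)) / 2)
            = s2 t ^ (((|m| + σ : ℤ) : ℝ)) := by
          rw [← Real.rpow_add hst]
          norm_num
        have hh : h.eval t ^ (2 * α + 1) * (h.eval t ^ l * h.eval t ^ l)
            = h.eval t ^ (2 * (l:ℝ) + 2 * α + 1) := by
          rw [← Real.rpow_natCast (h.eval t) l, ← Real.rpow_add hht, ← Real.rpow_add hht]
          congr 1
          push_cast; ring
        calc (1 - t ^ 2) ^ α * h.eval t ^ (2 * α + 1) *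
            (s2 t ^ (((|m| + σ : ℤ) : ℝ) / 2) * h.eval t ^ l * (Q m l k).eval t) *
            (s2 t ^ (((|m| + σ : ℤ) : ℝ) / 2) * h.eval t ^ l * (Q m l k').eval t)
            = ((1-t) ^ α * (1+t) ^ α) *
              (h.eval t ^ (2 * α + 1) * (h.eval t ^ l * h.eval t ^ l)) *
              (s2 t ^ ((((|m| + σ : ℤ) : ℝ)) / 2) * s2 t ^ ((((|m| + σ : ℤ) : ℝ)) / 2)) *
              ((Q m l k).eval t * (Q m l k').eval t) := by rw [hv]; ring
          _ = _ := by rw [hh, hs]; ring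
      rw [MeasureTheory.integral_const_mul]
      have h5 : (∫ t in Set.Ioo (-1:ℝ) 1,
          (((1 - t ^ 2) ^ α * h.eval t ^ (2 * α + 1) *
            (s2 t ^ (((|m| + σ : ℤ) : ℝ) / 2) * h.eval t ^ l * (Q m l k).eval t) *
            (s2 t ^ (((|m| + σ : ℤ) : ℝ) / 2) * h.eval t ^ l * (Q m l k').eval t) : ℝ) : ℂ))
          = (((if k = k' then (1:ℝ) else 0) : ℝ) : ℂ) := by
        rw [← h3]
        exact integral_ofReal
      rw [h5, hπ, ← mul_assoc, inv_mul_cancel₀ hπ0, one_mul]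
      by_cases hkk : k = k' <;> simp [hkk]
    · simp only [if_neg hll, zero_mul, Complex.ofReal_zero, mul_zero, integral_zero]
      rw [if_neg]
      tauto
  · -- m ≠ m' : the φ integral vanishes
    have hpt : ∀ t φ η : ℝ,
        (((1 - η ^ 2) ^ α * (1 - t ^ 2) ^ α * h.eval t ^ (2 * α + 1) : ℝ) : ℂ)
            * (starRingEnd ℂ) (Υ m l k t φ η) * Υ m' l' k' t φ η
        = Complex.exp (Complex.I * ((m' - m : ℤ) : ℂ) * φ) *
          ((((1 - η ^ 2) ^ α * (1 - t ^ 2) ^ α * h.eval t ^ (2 * α + 1)) *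
            (s2 t ^ (((|m| + σ : ℤ) : ℝ) / 2) * h.eval t ^ l
              * (P l).eval η * (Q m l k).eval t) *
            (s2 t ^ (((|m'| + σ : ℤ) : ℝ) / 2) * h.eval t ^ l'
              * (P l').eval η * (Q m' l' k').eval t) : ℝ) : ℂ) := by
      intro t φ η
      rw [hΥ, hΥ, map_mul, conjExpAux, Complex.conj_ofReal]
      have hexp : Complex.exp (-(Complex.I * m * φ)) * Complex.exp (Complex.I * m' * φ)
          = Complex.exp (Complex.I * ((m' - m : ℤ) : ℂ) * φ) := by
        rw [← Complex.exp_add]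
        congr 1
        push_cast; ring
      rw [← hexp]
      push_cast; ring
    simp only [hpt]
    have h1 : ∀ t η : ℝ,
        (∫ φ in Set.Ico (0:ℝ) (2*Real.pi),
          Complex.exp (Complex.I * ((m' - m : ℤ) : ℂ) * φ) *
          ((((1 - η ^ 2) ^ α * (1 - t ^ 2) ^ α * h.eval t ^ (2 * α + 1)) *
            (s2 t ^ (((|m| + σ : ℤ) : ℝ) / 2) * h.eval t ^ l
              * (P l).eval η * (Q m l k).eval t) *
            (s2 t ^ (((|m'| + σ : ℤ) : ℝ) / 2) * h.eval t ^ l'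
              * (P l').eval η * (Q m' l' k').eval t) : ℝ) : ℂ)) = 0 := by
      intro t η
      rw [MeasureTheory.integral_mul_const, expIntAux,
        if_neg (sub_ne_zero.mpr (Ne.symm hmm)), zero_mul]
    simp only [h1, integral_zero, mul_zero]
    rw [if_neg]
    tauto
end

section
/- For α = 0 the annulus gyroscopic basis functions converge pointwise to the cylinder gyroscopic basis functions as the inner radius shrinks to zero: for every (t,φ,η) ∈ [−1,1]×ℝ×[−1,1], lim_{S_i → 0⁺} Υ_{m,l,k}(t,φ,η; S_i) = Φ_{m,l,k}(t,φ,η). -/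
open MeasureTheory Polynomial Filter

open Set in

lemma aux_integrableOn (W f : ℝ → ℝ) (hW : ContinuousOn W (Set.Ioo (-1:ℝ) 1))
    (C : ℝ) (hC : ∀ t ∈ Set.Ioo (-1:ℝ) 1, |W t| ≤ C) (hf : Continuous f) :
    IntegrableOn (fun t => W t * f t) (Set.Ioo (-1:ℝ) 1) := by
  obtain ⟨Cf, hCf⟩ := (isCompact_Icc (a := (-1:ℝ)) (b := 1)).exists_bound_of_continuousOn
    hf.continuousOn
  refine ⟨(hW.mul hf.continuousOn).aestronglyMeasurable measurableSet_Ioo,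
    HasFiniteIntegral.restrict_of_bounded (C := C * Cf)
      ((measure_mono Set.Ioo_subset_Icc_self).trans_lt measure_Icc_lt_top) ?_⟩
  refine (ae_restrict_iff' measurableSet_Ioo).2 (Filter.Eventually.of_forall fun t ht => ?_)
  have h1 : |W t| ≤ C := hC t ht
  have h2 : ‖f t‖ ≤ Cf := hCf t (Set.Ioo_subset_Icc_self ht)
  calc ‖W t * f t‖ = |W t| * ‖f t‖ := abs_mul _ _
  _ ≤ C * Cf := mul_le_mul h1 h2 (norm_nonneg _) ((abs_nonneg _).trans h1)

lemma aux_poly_zero (W : ℝ → ℝ) (hWpos : ∀ t ∈ Set.Ioo (-1:ℝ) 1, 0 < W t)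
    (p : Polynomial ℝ)
    (hint : IntegrableOn (fun t => W t * (p.eval t * p.eval t)) (Set.Ioo (-1:ℝ) 1))
    (h0 : (∫ t in Set.Ioo (-1:ℝ) 1, W t * (p.eval t * p.eval t)) = 0) : p = 0 := by
  by_contra hp
  have hnn : 0 ≤ᵐ[volume.restrict (Set.Ioo (-1:ℝ) 1)] fun t => W t * (p.eval t * p.eval t) := by
    refine (ae_restrict_iff' measurableSet_Ioo).2 (Filter.Eventually.of_forall fun t ht => ?_)
    exact mul_nonneg (hWpos t ht).le (mul_self_nonneg _)
  have hae := (integral_eq_zero_iff_of_nonneg_ae hnn hint).1 h0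
  -- a.e. on Ioo, W t * p.eval t ^2 = 0, so p.eval t = 0 a.e.
  have hroots : ∀ᵐ t ∂(volume.restrict (Set.Ioo (-1:ℝ) 1)), p.IsRoot t := by
    filter_upwards [hae, ae_restrict_mem measurableSet_Ioo] with t h1 h2
    have hW := hWpos t h2
    have : p.eval t * p.eval t = 0 := by
      by_contra hne
      exact hne (by
        have := h1
        simp only [Pi.zero_apply] at this
        exact (mul_eq_zero.1 this).resolve_left hW.ne')
    have := mul_self_eq_zero.1 this
    exact this
  have hfin : Set.Finite {x | p.IsRoot x} := p.finite_setOf_isRoot hp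
  have hzero : volume.restrict (Set.Ioo (-1:ℝ) 1) {x | p.IsRoot x} = 0 := by
    rw [Measure.restrict_apply₀' measurableSet_Ioo.nullMeasurableSet]
    exact measure_mono_null Set.inter_subset_left (hfin.measure_zero volume)
  have := hroots
  rw [ae_iff] at this
  have htot : volume.restrict (Set.Ioo (-1:ℝ) 1) Set.univ = 0 := by
    have : Set.univ ⊆ {x | p.IsRoot x} ∪ {x | ¬ p.IsRoot x} := by
      intro x _; by_cases hx : p.IsRoot x
      · exact Or.inl hx
      · exact Or.inr hx
    refine le_antisymm ?_ zero_le
    calc volume.restrict (Set.Ioo (-1:ℝ) 1) Set.univ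
        ≤ volume.restrict (Set.Ioo (-1:ℝ) 1) {x | p.IsRoot x}
          + volume.restrict (Set.Ioo (-1:ℝ) 1) {x | ¬ p.IsRoot x} :=
          (measure_mono this).trans (measure_union_le _ _)
    _ = 0 := by rw [hzero, ‹volume.restrict _ {a | ¬ p.IsRoot a} = 0›]; simp
  rw [Measure.restrict_apply_univ] at htot
  simp [Real.volume_Ioo] at htot
  linarith [htot]

lemma aux_ortho (W : ℝ → ℝ)
    (hint : ∀ f : ℝ → ℝ, Continuous f →
      IntegrableOn (fun t => W t * f t) (Set.Ioo (-1:ℝ) 1))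
    (Q : ℕ → Polynomial ℝ) (hdeg : ∀ j, (Q j).degree = j)
    (R : Polynomial ℝ) (k : ℕ)
    (horth : ∀ j, j < k → (∫ t in Set.Ioo (-1:ℝ) 1, W t * ((Q j).eval t * R.eval t)) = 0) :
    ∀ p : Polynomial ℝ, p.degree < (k : ℕ) →
      (∫ t in Set.Ioo (-1:ℝ) 1, W t * (p.eval t * R.eval t)) = 0 := by
  have hintJ : ∀ p : Polynomial ℝ,
      IntegrableOn (fun t => W t * (p.eval t * R.eval t)) (Set.Ioo (-1:ℝ) 1) := by
    intro p
    exact hint _ ((p.continuous_aeval).mul (R.continuous_aeval))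
  suffices H : ∀ n : ℕ, n ≤ k → ∀ p : Polynomial ℝ, p.degree < (n : ℕ) →
      (∫ t in Set.Ioo (-1:ℝ) 1, W t * (p.eval t * R.eval t)) = 0 by
    exact H k le_rfl
  intro n
  induction n with
  | zero =>
    intro _ p hp
    have hp0 : p = 0 := by
      rw [← Polynomial.degree_eq_bot]
      exact Nat.WithBot.lt_zero_iff.mp (by exact_mod_cast hp)
    subst hp0
    simp
  | succ n ih =>
    intro hnk p hp
    have hQn : (Q n).degree = n := hdeg n
    have hQne : Q n ≠ 0 := fun h0 => by simp [h0] at hQn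
    have hQnat : (Q n).natDegree = n := Polynomial.natDegree_eq_of_degree_eq_some hQn
    have hlc : (Q n).coeff n ≠ 0 := by
      have := Polynomial.leadingCoeff_ne_zero.mpr hQne
      rwa [Polynomial.leadingCoeff, hQnat] at this
    set c := p.coeff n / (Q n).coeff n with hc
    have hq : (p - Polynomial.C c * Q n).degree < (n : ℕ) := by
      rw [Polynomial.degree_lt_iff_coeff_zero]
      intro m hm
      rcases eq_or_lt_of_le hm with hmn | hm'
      · have hmn' : m = n := by exact_mod_cast hmn.symm
        subst hmn'
        simp [Polynomial.coeff_sub, Polynomial.coeff_C_mul, hc, div_mul_cancel₀ _ hlc]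
      · have hm2 : (n : ℕ) < m := by exact_mod_cast hm'
        have h1 : p.coeff m = 0 := by
          apply Polynomial.coeff_eq_zero_of_degree_lt
          calc p.degree < ((n+1 : ℕ) : WithBot ℕ) := by exact_mod_cast hp
          _ ≤ (m : WithBot ℕ) := by exact_mod_cast Nat.succ_le_of_lt hm2
        have h2 : (Q n).coeff m = 0 := by
          apply Polynomial.coeff_eq_zero_of_degree_lt
          rw [hQn]; exact_mod_cast hm2
        simp [Polynomial.coeff_sub, Polynomial.coeff_C_mul, h1, h2]
    have hdecomp : ∀ t : ℝ, W t * (p.eval t * R.eval t) =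
        W t * ((p - Polynomial.C c * Q n).eval t * R.eval t)
          + c * (W t * ((Q n).eval t * R.eval t)) := by
      intro t; simp only [Polynomial.eval_sub, Polynomial.eval_mul, Polynomial.eval_C]; ring
    rw [show (fun t => W t * (p.eval t * R.eval t)) =
        (fun t => W t * ((p - Polynomial.C c * Q n).eval t * R.eval t)
          + c * (W t * ((Q n).eval t * R.eval t))) from funext hdecomp]
    rw [integral_add (hintJ _) ((hintJ (Q n)).const_mul c)]
    rw [MeasureTheory.integral_const_mul]
    rw [ih (Nat.le_of_succ_le hnk) _ hq, horth n (Nat.lt_of_succ_le hnk)]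
    ring

lemma aux_quad (W : ℝ → ℝ) (hWpos : ∀ t ∈ Set.Ioo (-1:ℝ) 1, 0 < W t)
    (hint : ∀ f : ℝ → ℝ, Continuous f →
      IntegrableOn (fun t => W t * f t) (Set.Ioo (-1:ℝ) 1)) (k : ℕ)
    (hpz : ∀ p : Polynomial ℝ,
      (∫ t in Set.Ioo (-1:ℝ) 1, W t * (p.eval t * p.eval t)) = 0 → p = 0) :
    ∃ m₀ > 0, ∀ v : Fin (k+1) → ℝ,
      m₀ * (∑ i, v i ^ 2) ≤ ∫ t in Set.Ioo (-1:ℝ) 1,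
        W t * ((∑ i : Fin (k+1), v i * t ^ (i:ℕ)) * (∑ i : Fin (k+1), v i * t ^ (i:ℕ))) := by
  classical
  set μn : ℕ → ℝ := fun n => ∫ t in Set.Ioo (-1:ℝ) 1, W t * t ^ n with hμn
  set G : (Fin (k+1) → ℝ) → ℝ :=
    fun v => ∑ i : Fin (k+1), ∑ j : Fin (k+1), v i * v j * μn ((i:ℕ) + (j:ℕ)) with hG
  have expand : ∀ v : Fin (k+1) → ℝ,
      (∫ t in Set.Ioo (-1:ℝ) 1,
        W t * ((∑ i : Fin (k+1), v i * t ^ (i:ℕ)) * (∑ i : Fin (k+1), v i * t ^ (i:ℕ)))) = G v := by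
    intro v
    have hpt : ∀ t : ℝ, W t * ((∑ i : Fin (k+1), v i * t ^ (i:ℕ)) * (∑ i : Fin (k+1), v i * t ^ (i:ℕ)))
        = ∑ i : Fin (k+1), ∑ j : Fin (k+1), v i * v j * (W t * t ^ ((i:ℕ) + (j:ℕ))) := by
      intro t
      rw [Finset.sum_mul_sum, Finset.mul_sum]
      refine Finset.sum_congr rfl fun i _ => ?_
      rw [Finset.mul_sum]
      refine Finset.sum_congr rfl fun j _ => ?_
      ring
    rw [show (fun t => W t * ((∑ i : Fin (k+1), v i * t ^ (i:ℕ)) * (∑ i : Fin (k+1), v i * t ^ (i:ℕ))))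
        = (fun t => ∑ i : Fin (k+1), ∑ j : Fin (k+1), v i * v j * (W t * t ^ ((i:ℕ) + (j:ℕ))))
      from funext hpt]
    rw [integral_finset_sum _ (fun i _ => integrable_finset_sum _
      (fun j _ => ((hint _ (continuous_pow _)).const_mul (v i * v j))))]
    refine Finset.sum_congr rfl fun i _ => ?_
    rw [integral_finset_sum _ (fun j _ => ((hint _ (continuous_pow _)).const_mul (v i * v j)))]
    refine Finset.sum_congr rfl fun j _ => ?_
    rw [MeasureTheory.integral_const_mul]
  -- compactness of the sphere
  set S : Set (Fin (k+1) → ℝ) := {v | ∑ i, v i ^ 2 = 1} with hS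
  have hGc : Continuous G := by
    apply continuous_finset_sum
    intro i _
    apply continuous_finset_sum
    intro j _
    exact ((continuous_apply i).mul (continuous_apply j)).mul continuous_const
  have hSc : IsCompact S := by
    rw [Metric.isCompact_iff_isClosed_bounded]
    constructor
    · exact isClosed_eq (continuous_finset_sum _ fun i _ => (continuous_apply i).pow 2)
        continuous_const
    · apply Bornology.IsBounded.subset (Metric.isBounded_closedBall (x := (0 : Fin (k+1) → ℝ)) (r := 1))
      intro v hv
      rw [Metric.mem_closedBall, dist_zero_right]
      rw [pi_norm_le_iff_of_nonneg zero_le_one]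
      intro i
      have h1 : v i ^ 2 ≤ 1 := by
        rw [← hv]
        exact Finset.single_le_sum (f := fun i => v i ^ 2) (fun j _ => sq_nonneg _)
          (Finset.mem_univ i)
      rw [Real.norm_eq_abs]
      nlinarith [abs_nonneg (v i), sq_abs (v i)]
  have hSne : S.Nonempty := by
    refine ⟨fun i => if i = 0 then 1 else 0, ?_⟩
    show (∑ i : Fin (k+1), (if i = 0 then (1:ℝ) else 0) ^ 2) = 1
    rw [Finset.sum_congr rfl (fun i _ => show (if i = (0: Fin (k+1)) then (1:ℝ) else 0) ^ 2
      = if i = 0 then 1 else 0 from by split <;> norm_num)]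
    simp
  obtain ⟨v₀, hv₀S, hmin⟩ := hSc.exists_isMinOn hSne hGc.continuousOn
  -- positivity of the minimum
  have hGnonneg : ∀ v : Fin (k+1) → ℝ, 0 ≤ G v := by
    intro v
    rw [← expand]
    apply setIntegral_nonneg measurableSet_Ioo
    intro t ht
    exact mul_nonneg (hWpos t ht).le (mul_self_nonneg _)
  have hGpos : ∀ v ∈ S, 0 < G v := by
    intro v hv
    rcases lt_or_eq_of_le (hGnonneg v) with h | h
    · exact h
    exfalso
    -- G v = 0 with v on the sphere: the polynomial is zero, contradiction
    set p : Polynomial ℝ := ∑ i : Fin (k+1), Polynomial.C (v i) * Polynomial.X ^ (i:ℕ) with hp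
    have hev : ∀ t : ℝ, p.eval t = ∑ i : Fin (k+1), v i * t ^ (i:ℕ) := by
      intro t; simp [hp, Polynomial.eval_finset_sum]
    have hint0 : (∫ t in Set.Ioo (-1:ℝ) 1, W t * (p.eval t * p.eval t)) = 0 := by
      rw [show (fun t => W t * (p.eval t * p.eval t))
          = (fun t => W t * ((∑ i : Fin (k+1), v i * t ^ (i:ℕ)) * (∑ i : Fin (k+1), v i * t ^ (i:ℕ))))
        from funext fun t => by rw [hev]]
      rw [expand, ← h]
    have hp0 : p = 0 := hpz p hint0
    have hco : ∀ i : Fin (k+1), v i = 0 := by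
      intro i
      have : p.coeff (i:ℕ) = v i := by
        rw [hp, Polynomial.finset_sum_coeff]
        rw [Finset.sum_eq_single i]
        · simp
        · intro j _ hji
          simp only [Polynomial.coeff_C_mul, Polynomial.coeff_X_pow]
          rw [if_neg (fun hji' => hji (Fin.ext (by omega)))]
          ring
        · intro hi; exact absurd (Finset.mem_univ i) hi
      rw [← this, hp0]
      simp
    have : (∑ i, v i ^ 2) = 1 := hv
    rw [Finset.sum_eq_zero (fun i _ => by rw [hco i]; ring)] at this
    norm_num at this
  refine ⟨G v₀, hGpos v₀ hv₀S, ?_⟩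
  intro v
  rw [expand]
  by_cases hvz : ∀ i, v i = 0
  · have : G v = 0 := by
      rw [hG]
      refine Finset.sum_eq_zero fun i _ => Finset.sum_eq_zero fun j _ => by rw [hvz i]; ring
    rw [this, Finset.sum_eq_zero (fun i _ => by rw [hvz i]; ring)]
    simp
  · push_neg at hvz
    obtain ⟨i₀, hi₀⟩ := hvz
    set r : ℝ := Real.sqrt (∑ i, v i ^ 2) with hr
    have hsum_pos : 0 < ∑ i, v i ^ 2 := by
      have h1 : v i₀ ^ 2 ≤ ∑ i, v i ^ 2 :=
        Finset.single_le_sum (f := fun i => v i ^ 2) (fun j _ => sq_nonneg _) (Finset.mem_univ i₀)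
      have : 0 < v i₀ ^ 2 := by positivity
      linarith
    have hrpos : 0 < r := Real.sqrt_pos.mpr hsum_pos
    have hrsq : r ^ 2 = ∑ i, v i ^ 2 := Real.sq_sqrt hsum_pos.le
    set u : Fin (k+1) → ℝ := fun i => r⁻¹ * v i with hu
    have huS : u ∈ S := by
      simp only [hS, Set.mem_setOf_eq, hu]
      rw [Finset.sum_congr rfl (fun i _ => show (r⁻¹ * v i) ^ 2 = r⁻¹ ^ 2 * v i ^ 2 from by ring),
        ← Finset.mul_sum, ← hrsq]
      field_simp
    have hGu : G v = r ^ 2 * G u := by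
      rw [hG]
      rw [Finset.mul_sum]
      refine Finset.sum_congr rfl fun i _ => ?_
      rw [Finset.mul_sum]
      refine Finset.sum_congr rfl fun j _ => ?_
      simp only [hu]
      field_simp
    calc G v₀ * ∑ i, v i ^ 2 = (∑ i, v i ^ 2) * G v₀ := by ring
    _ ≤ (∑ i, v i ^ 2) * G u := mul_le_mul_of_nonneg_left (hmin huS) hsum_pos.le
    _ = G v := by rw [hGu, hrsq]

lemma aux_deg_sub (p q : Polynomial ℝ) (n : ℕ) (hp : p.degree ≤ (n:ℕ)) (hq : q.degree = (n:ℕ))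
    (c : ℝ) (hc : p.coeff n = c * q.coeff n) : (p - Polynomial.C c * q).degree < (n:ℕ) := by
  rw [Polynomial.degree_lt_iff_coeff_zero]
  intro m hm
  rcases eq_or_lt_of_le hm with hmn | hm'
  · have hmn' : m = n := by exact_mod_cast hmn.symm
    subst hmn'
    simp [Polynomial.coeff_sub, Polynomial.coeff_C_mul, hc]
  · have hm2 : (n:ℕ) < m := by exact_mod_cast hm'
    have h1 : p.coeff m = 0 := Polynomial.coeff_eq_zero_of_degree_lt
      (lt_of_le_of_lt hp (by exact_mod_cast hm2))
    have h2 : q.coeff m = 0 := Polynomial.coeff_eq_zero_of_degree_lt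
      (by rw [hq]; exact_mod_cast hm2)
    simp [Polynomial.coeff_sub, Polynomial.coeff_C_mul, h1, h2]

lemma aux_unique (W : ℝ → ℝ)
    (hint : ∀ f : ℝ → ℝ, Continuous f →
      IntegrableOn (fun t => W t * f t) (Set.Ioo (-1:ℝ) 1))
    (hpz : ∀ p : Polynomial ℝ,
      (∫ t in Set.Ioo (-1:ℝ) 1, W t * (p.eval t * p.eval t)) = 0 → p = 0)
    (k : ℕ) (Qk : Polynomial ℝ) (hQkdeg : Qk.degree = (k:ℕ)) (hQklead : 0 < Qk.leadingCoeff)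
    (hQknorm : (∫ t in Set.Ioo (-1:ℝ) 1, W t * (Qk.eval t * Qk.eval t)) = 1)
    (hQkorth : ∀ p : Polynomial ℝ, p.degree < (k:ℕ) →
      (∫ t in Set.Ioo (-1:ℝ) 1, W t * (p.eval t * Qk.eval t)) = 0)
    (R : Polynomial ℝ) (hRdeg : R.degree ≤ (k:ℕ))
    (hRorth : ∀ p : Polynomial ℝ, p.degree < (k:ℕ) →
      (∫ t in Set.Ioo (-1:ℝ) 1, W t * (p.eval t * R.eval t)) = 0)
    (hRnorm : (∫ t in Set.Ioo (-1:ℝ) 1, W t * (R.eval t * R.eval t)) = 1)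
    (hRlead : 0 ≤ R.coeff k) : R = Qk := by
  have hintJ : ∀ p q : Polynomial ℝ,
      IntegrableOn (fun t => W t * (p.eval t * q.eval t)) (Set.Ioo (-1:ℝ) 1) := fun p q =>
    hint _ ((p.continuous_aeval).mul (q.continuous_aeval))
  have hQknat : Qk.natDegree = k := Polynomial.natDegree_eq_of_degree_eq_some hQkdeg
  have hQkck : Qk.coeff k = Qk.leadingCoeff := by rw [Polynomial.leadingCoeff, hQknat]
  set c : ℝ := R.coeff k / Qk.coeff k with hcdef
  have hck : R.coeff k = c * Qk.coeff k := by
    have h1 : Qk.coeff k ≠ 0 := by rw [hQkck]; exact hQklead.ne'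
    rw [hcdef]; field_simp
  set S : Polynomial ℝ := R - Polynomial.C c * Qk with hSdef
  have hSdeg : S.degree < (k:ℕ) := aux_deg_sub R Qk k hRdeg hQkdeg c hck
  have hSzero : S = 0 := by
    apply hpz
    have hsplit : ∀ t : ℝ, W t * (S.eval t * S.eval t)
        = W t * (S.eval t * R.eval t) - c * (W t * (S.eval t * Qk.eval t)) := by
      intro t; simp only [hSdef, Polynomial.eval_sub, Polynomial.eval_mul, Polynomial.eval_C]
      ring
    rw [show (fun t => W t * (S.eval t * S.eval t))
        = (fun t => W t * (S.eval t * R.eval t) - c * (W t * (S.eval t * Qk.eval t)))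
      from funext hsplit]
    rw [integral_sub (hintJ S R) ((hintJ S Qk).const_mul c), MeasureTheory.integral_const_mul]
    rw [hRorth S hSdeg, hQkorth S hSdeg]
    ring
  have hRc : R = Polynomial.C c * Qk := by
    have := hSzero
    rw [hSdef, sub_eq_zero] at this
    exact this
  have hc1 : c ^ 2 = 1 := by
    have : (∫ t in Set.Ioo (-1:ℝ) 1, W t * (R.eval t * R.eval t)) = c ^ 2 := by
      rw [show (fun t => W t * (R.eval t * R.eval t))
          = (fun t => (c * c) * (W t * (Qk.eval t * Qk.eval t))) from funext fun t => by
        rw [hRc]; simp only [Polynomial.eval_mul, Polynomial.eval_C]; ring]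
      rw [MeasureTheory.integral_const_mul, hQknorm]
      ring
    rw [hRnorm] at this
    exact this.symm
  have hcpos : 0 ≤ c := by
    by_contra hneg
    push_neg at hneg
    have h1 : 0 < Qk.coeff k := hQkck ▸ hQklead
    nlinarith [hck]
  have : c = 1 := by nlinarith
  rw [hRc, this]
  simp

variable {h : Polynomial ℝ} {So α e : ℝ}

lemma s_pos (hSo : 0 < So) (Si t : ℝ) (ht : t ∈ Set.Ioo (-1:ℝ) 1) :
    0 < Si ^ 2 * (1 - t) + So ^ 2 * (1 + t) := by
  have h1 : 0 ≤ Si ^ 2 * (1 - t) := mul_nonneg (sq_nonneg _) (by linarith [ht.2])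
  have h2 : 0 < So ^ 2 * (1 + t) := mul_pos (pow_pos hSo 2) (by linarith [ht.1])
  linarith

lemma s_nonneg (Si t : ℝ) (ht : t ∈ Set.Icc (-1:ℝ) 1) :
    0 ≤ Si ^ 2 * (1 - t) + So ^ 2 * (1 + t) := by
  have h1 : 0 ≤ Si ^ 2 * (1 - t) := mul_nonneg (sq_nonneg _) (by linarith [ht.2])
  have h2 : 0 ≤ So ^ 2 * (1 + t) := mul_nonneg (by positivity) (by linarith [ht.1])
  linarith

lemma annW_contOn (hpos : ∀ t ∈ Set.Icc (-1:ℝ) 1, 0 < h.eval t) (hSo : 0 < So) (Si : ℝ) :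
    ContinuousOn (fun t : ℝ => h.eval t ^ e * (Si ^ 2 * (1 - t) + So ^ 2 * (1 + t)) ^ α)
      (Set.Ioo (-1:ℝ) 1) := by
  apply ContinuousOn.mul
  · exact ContinuousOn.rpow_const (h.continuous_aeval.continuousOn)
      (fun t ht => Or.inl (hpos t (Set.Ioo_subset_Icc_self ht)).ne')
  · exact ContinuousOn.rpow_const (by fun_prop)
      (fun t ht => Or.inl (s_pos hSo Si t ht).ne')

lemma annW_bound (hpos : ∀ t ∈ Set.Icc (-1:ℝ) 1, 0 < h.eval t) (hα : 0 ≤ α) (he : 0 ≤ e) : ∃ C : ℝ, ∀ Si : ℝ, Si ^ 2 ≤ So ^ 2 → ∀ t ∈ Set.Ioo (-1:ℝ) 1,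
    |h.eval t ^ e * (Si ^ 2 * (1 - t) + So ^ 2 * (1 + t)) ^ α| ≤ C := by
  obtain ⟨Mh, hMh⟩ := (isCompact_Icc (a := (-1:ℝ)) (b := 1)).exists_bound_of_continuousOn
    h.continuous_aeval.continuousOn
  refine ⟨Mh ^ e * (4 * So ^ 2) ^ α, fun Si hSi t ht => ?_⟩
  have ht' := Set.Ioo_subset_Icc_self ht
  have h1 : 0 ≤ h.eval t := (hpos t ht').le
  have h2 : h.eval t ≤ Mh := (le_abs_self _).trans (hMh t ht')
  have h3 : h.eval t ^ e ≤ Mh ^ e := Real.rpow_le_rpow h1 h2 he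
  have h4 : Si ^ 2 * (1 - t) + So ^ 2 * (1 + t) ≤ 4 * So ^ 2 := by
    have := ht'.1; have := ht'.2
    nlinarith [sq_nonneg Si, sq_nonneg So]
  have h5 : (Si ^ 2 * (1 - t) + So ^ 2 * (1 + t)) ^ α ≤ (4 * So ^ 2) ^ α :=
    Real.rpow_le_rpow (s_nonneg Si t ht') h4 hα
  have h6 : 0 ≤ h.eval t ^ e := Real.rpow_nonneg h1 _
  have h7 : 0 ≤ (Si ^ 2 * (1 - t) + So ^ 2 * (1 + t)) ^ α :=
    Real.rpow_nonneg (s_nonneg Si t ht') _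
  rw [abs_of_nonneg (mul_nonneg h6 h7)]
  have hMh0 : 0 ≤ Mh := (norm_nonneg _).trans (hMh (-1) (by norm_num))
  exact mul_le_mul h3 h5 h7 (Real.rpow_nonneg hMh0 _)

lemma cylW_contOn (hpos : ∀ t ∈ Set.Icc (-1:ℝ) 1, 0 < h.eval t) :
    ContinuousOn (fun t : ℝ => (1 + t) ^ α * h.eval t ^ e) (Set.Ioo (-1:ℝ) 1) := by
  apply ContinuousOn.mul
  · refine ContinuousOn.rpow_const (by fun_prop) (fun t ht => Or.inl ?_)
    have h1 : (-1:ℝ) < t := ht.1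
    have h2 : (0:ℝ) < 1 + t := by linarith
    exact h2.ne'
  · exact ContinuousOn.rpow_const (h.continuous_aeval.continuousOn)
      (fun t ht => Or.inl (hpos t (Set.Ioo_subset_Icc_self ht)).ne')

lemma cylW_pos (hpos : ∀ t ∈ Set.Icc (-1:ℝ) 1, 0 < h.eval t) : ∀ t ∈ Set.Ioo (-1:ℝ) 1, 0 < (1 + t) ^ α * h.eval t ^ e := by
  intro t ht
  have h1 : (0:ℝ) < 1 + t := by linarith [ht.1]
  exact mul_pos (Real.rpow_pos_of_pos h1 _)
    (Real.rpow_pos_of_pos (hpos t (Set.Ioo_subset_Icc_self ht)) _)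

lemma cylW_bound (hpos : ∀ t ∈ Set.Icc (-1:ℝ) 1, 0 < h.eval t) (hα : 0 ≤ α) (he : 0 ≤ e) : ∃ C : ℝ, ∀ t ∈ Set.Ioo (-1:ℝ) 1, |(1 + t) ^ α * h.eval t ^ e| ≤ C := by
  obtain ⟨Mh, hMh⟩ := (isCompact_Icc (a := (-1:ℝ)) (b := 1)).exists_bound_of_continuousOn
    h.continuous_aeval.continuousOn
  refine ⟨2 ^ α * Mh ^ e, fun t ht => ?_⟩
  have ht' := Set.Ioo_subset_Icc_self ht
  have h1 : 0 ≤ h.eval t := (hpos t ht').le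
  have h2 : h.eval t ≤ Mh := (le_abs_self _).trans (hMh t ht')
  have h3 : h.eval t ^ e ≤ Mh ^ e := Real.rpow_le_rpow h1 h2 he
  have h0 : (0:ℝ) ≤ 1 + t := by linarith [ht'.1]
  have h4 : (1 + t) ^ α ≤ 2 ^ α := Real.rpow_le_rpow h0 (by linarith [ht'.2]) hα
  have h6 : 0 ≤ h.eval t ^ e := Real.rpow_nonneg h1 _
  have h7 : 0 ≤ (1 + t) ^ α := Real.rpow_nonneg h0 _
  rw [abs_of_nonneg (mul_nonneg h7 h6)]
  exact mul_le_mul h4 h3 h6 (Real.rpow_nonneg (by norm_num) _)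

lemma annW_zero_eq (t : ℝ) (ht : t ∈ Set.Icc (-1:ℝ) 1) :
    h.eval t ^ e * ((0:ℝ) ^ 2 * (1 - t) + So ^ 2 * (1 + t)) ^ α
      = (So ^ 2) ^ α * ((1 + t) ^ α * h.eval t ^ e) := by
  have h0 : (0:ℝ) ^ 2 * (1 - t) + So ^ 2 * (1 + t) = So ^ 2 * (1 + t) := by ring
  rw [h0, Real.mul_rpow (sq_nonneg So) (by linarith [ht.1])]
  ring


lemma vecPoly_coeff {k : ℕ} (v : Fin (k+1) → ℝ) (j : Fin (k+1)) :
    (∑ i : Fin (k+1), Polynomial.C (v i) * Polynomial.X ^ (i:ℕ)).coeff (j:ℕ) = v j := by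
  rw [Polynomial.finset_sum_coeff, Finset.sum_eq_single j]
  · simp
  · intro i _ hij
    simp only [Polynomial.coeff_C_mul, Polynomial.coeff_X_pow]
    rw [if_neg (fun hij' => hij (Fin.ext (by omega)))]
    ring
  · intro hj; exact absurd (Finset.mem_univ j) hj

lemma vecPoly_degree {k : ℕ} (v : Fin (k+1) → ℝ) :
    (∑ i : Fin (k+1), Polynomial.C (v i) * Polynomial.X ^ (i:ℕ)).degree ≤ ((k:ℕ) : WithBot ℕ) := by
  refine (Polynomial.degree_sum_le _ _).trans ?_
  rw [Finset.sup_le_iff]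
  intro i _
  refine (Polynomial.degree_C_mul_X_pow_le _ _).trans ?_
  exact_mod_cast Nat.lt_succ_iff.mp i.isLt

lemma vecPoly_eval {k : ℕ} (v : Fin (k+1) → ℝ) (t : ℝ) :
    (∑ i : Fin (k+1), Polynomial.C (v i) * Polynomial.X ^ (i:ℕ)).eval t
      = ∑ i : Fin (k+1), v i * t ^ (i:ℕ) := by
  rw [Polynomial.eval_finset_sum]
  exact Finset.sum_congr rfl fun i _ => by simp
section SEQ
variable {h : Polynomial ℝ} {So α e : ℝ}

lemma aux_seq (hpos : ∀ t ∈ Set.Icc (-1:ℝ) 1, 0 < h.eval t)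
    (hSo : 0 < So) (hα : 0 ≤ α) (he : 0 ≤ e) (k : ℕ)
    (Qcyl : ℕ → Polynomial ℝ)
    (hQcyldeg : ∀ j, (Qcyl j).degree = j) (hQcyllead : ∀ j, 0 < (Qcyl j).leadingCoeff)
    (hQcylorth : ∀ j j', (∫ t in Set.Ioo (-1:ℝ) 1,
        (1 + t) ^ α * h.eval t ^ e * (Qcyl j).eval t * (Qcyl j').eval t)
      = if j = j' then (1:ℝ) else 0)
    (Qann : ℝ → ℕ → Polynomial ℝ)
    (hQanndeg : ∀ Si ∈ Set.Ioo (0:ℝ) So, ∀ j, (Qann Si j).degree = j)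
    (hQannlead : ∀ Si ∈ Set.Ioo (0:ℝ) So, ∀ j, 0 < (Qann Si j).leadingCoeff)
    (hQannorth : ∀ Si ∈ Set.Ioo (0:ℝ) So, ∀ j j', (∫ t in Set.Ioo (-1:ℝ) 1,
        h.eval t ^ e * (Si^2*(1-t)+So^2*(1+t)) ^ α
          * (Qann Si j).eval t * (Qann Si j').eval t)
      = if j = j' then (1:ℝ) else 0)
    (u : ℕ → ℝ) (hu : ∀ n, u n ∈ Set.Ioo (0:ℝ) So) (hu0 : Tendsto u atTop (nhds 0)) :
    ∃ φ : ℕ → ℕ, ∀ t : ℝ, Tendsto (fun n => (Qann (u (φ n)) k).eval t) atTop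
      (nhds ((((So^2) ^ (α/2:ℝ))⁻¹ * (Qcyl k).eval t))) := by
  classical
  set Wc : ℝ → ℝ := fun t => (1 + t) ^ α * h.eval t ^ e with hWc
  set WA : ℝ → ℝ → ℝ :=
    fun Si t => h.eval t ^ e * (Si^2*(1-t)+So^2*(1+t)) ^ α with hWA
  obtain ⟨Cb, hCb⟩ := annW_bound (h := h) (So := So) (α := α) (e := e) hpos hα he
  obtain ⟨Cc, hCc⟩ := cylW_bound (h := h) (α := α) (e := e) hpos hα he
  have hWcint : ∀ f : ℝ → ℝ, Continuous f →
      IntegrableOn (fun t => Wc t * f t) (Set.Ioo (-1:ℝ) 1) :=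
    fun f hf => aux_integrableOn Wc f (cylW_contOn hpos) Cc hCc hf
  have hsq : ∀ Si ∈ Set.Ioo (0:ℝ) So, Si ^ 2 ≤ So ^ 2 := by
    intro Si hSi
    nlinarith [hSi.1, hSi.2]
  have hWAint : ∀ Si : ℝ, Si ^ 2 ≤ So ^ 2 → ∀ f : ℝ → ℝ, Continuous f →
      IntegrableOn (fun t => WA Si t * f t) (Set.Ioo (-1:ℝ) 1) :=
    fun Si hSi f hf => aux_integrableOn (WA Si) f (annW_contOn hpos hSo Si) Cb (hCb Si hSi) hf
  have hpzc : ∀ p : Polynomial ℝ,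
      (∫ t in Set.Ioo (-1:ℝ) 1, Wc t * (p.eval t * p.eval t)) = 0 → p = 0 :=
    fun p hp => aux_poly_zero Wc (cylW_pos hpos) p
      (hWcint _ ((p.continuous_aeval).mul (p.continuous_aeval))) hp
  obtain ⟨m₀, hm₀, hquad⟩ := aux_quad Wc (cylW_pos hpos) hWcint k hpzc
  set γ : ℝ := (So^2) ^ (α/2:ℝ) with hγdef
  have hγ : 0 < γ := Real.rpow_pos_of_pos (pow_pos hSo 2) _
  have hγsq : γ * γ = (So^2) ^ α := by
    rw [hγdef, ← Real.rpow_add (pow_pos hSo 2)]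
    norm_num
  have hγα : 0 < (So^2 : ℝ) ^ α := Real.rpow_pos_of_pos (pow_pos hSo 2) _
  -- coefficient vectors
  set v : ℕ → Fin (k+1) → ℝ := fun n i => (Qann (u n) k).coeff i with hv
  have hQdeg : ∀ n, (Qann (u n) k).degree = (k : ℕ) := fun n => hQanndeg (u n) (hu n) k
  have hQnat : ∀ n, (Qann (u n) k).natDegree = k :=
    fun n => Polynomial.natDegree_eq_of_degree_eq_some (hQdeg n)
  have hqeval : ∀ n t, (Qann (u n) k).eval t = ∑ i : Fin (k+1), v n i * t ^ (i:ℕ) := by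
    intro n t
    rw [Polynomial.eval_eq_sum_range' (Nat.lt_succ_of_le (le_of_eq (hQnat n))) t]
    rw [← Fin.sum_univ_eq_sum_range (fun i => (Qann (u n) k).coeff i * t ^ i) (k+1)]
  -- normalization gives an L² bound with respect to Wc
  have hQannorth' : ∀ n, ∀ j j', (∫ t in Set.Ioo (-1:ℝ) 1,
      WA (u n) t * ((Qann (u n) j).eval t * (Qann (u n) j').eval t))
        = if j = j' then (1:ℝ) else 0 := by
    intro n j j'
    rw [show (fun t => WA (u n) t * ((Qann (u n) j).eval t * (Qann (u n) j').eval t))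
        = (fun t => h.eval t ^ e * ((u n)^2*(1-t)+So^2*(1+t)) ^ α
            * (Qann (u n) j).eval t * (Qann (u n) j').eval t)
      from funext fun t => by rw [hWA]; ring]
    exact hQannorth (u n) (hu n) j j'
  have hWcQbound : ∀ n, (∫ t in Set.Ioo (-1:ℝ) 1,
      Wc t * ((Qann (u n) k).eval t * (Qann (u n) k).eval t)) ≤ (((So^2:ℝ) ^ α))⁻¹ := by
    intro n
    have hmono : ∀ t ∈ Set.Ioo (-1:ℝ) 1,
        (So^2:ℝ)^α * (Wc t * ((Qann (u n) k).eval t * (Qann (u n) k).eval t))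
          ≤ WA (u n) t * ((Qann (u n) k).eval t * (Qann (u n) k).eval t) := by
      intro t ht
      have ht' := Set.Ioo_subset_Icc_self ht
      have key : (So^2:ℝ)^α * Wc t ≤ WA (u n) t := by
        have h1 := annW_zero_eq (h := h) (So := So) (α := α) (e := e) t ht'
        rw [hWc, hWA]
        calc (So^2:ℝ)^α * ((1 + t) ^ α * h.eval t ^ e)
            = h.eval t ^ e * ((0:ℝ) ^ 2 * (1 - t) + So ^ 2 * (1 + t)) ^ α := h1.symm
        _ ≤ h.eval t ^ e * ((u n)^2*(1-t)+So^2*(1+t)) ^ α := by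
            apply mul_le_mul_of_nonneg_left _ (Real.rpow_nonneg (hpos t ht').le _)
            apply Real.rpow_le_rpow (s_nonneg (0:ℝ) t ht') _ hα
            have := ht'.2
            nlinarith [sq_nonneg (u n)]
      calc (So^2:ℝ)^α * (Wc t * ((Qann (u n) k).eval t * (Qann (u n) k).eval t))
          = ((So^2:ℝ)^α * Wc t) * ((Qann (u n) k).eval t * (Qann (u n) k).eval t) := by ring
      _ ≤ WA (u n) t * ((Qann (u n) k).eval t * (Qann (u n) k).eval t) :=
          mul_le_mul_of_nonneg_right key (mul_self_nonneg _)
    have hint1 : IntegrableOn (fun t => (So^2:ℝ)^α *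
        (Wc t * ((Qann (u n) k).eval t * (Qann (u n) k).eval t))) (Set.Ioo (-1:ℝ) 1) := by
      exact ((hWcint _ (((Qann (u n) k).continuous_aeval).mul
        ((Qann (u n) k).continuous_aeval))).const_mul _)
    have hint2 : IntegrableOn (fun t => WA (u n) t *
        ((Qann (u n) k).eval t * (Qann (u n) k).eval t)) (Set.Ioo (-1:ℝ) 1) :=
      hWAint (u n) (hsq (u n) (hu n)) _ (((Qann (u n) k).continuous_aeval).mul
        ((Qann (u n) k).continuous_aeval))
    have hle := setIntegral_mono_on hint1 hint2 measurableSet_Ioo hmono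
    rw [MeasureTheory.integral_const_mul] at hle
    have hone : (∫ t in Set.Ioo (-1:ℝ) 1,
        WA (u n) t * ((Qann (u n) k).eval t * (Qann (u n) k).eval t)) = 1 := by
      have := hQannorth' n k k
      simpa using this
    rw [hone] at hle
    calc (∫ t in Set.Ioo (-1:ℝ) 1, Wc t * ((Qann (u n) k).eval t * (Qann (u n) k).eval t))
        = ((So^2:ℝ)^α)⁻¹ * ((So^2:ℝ)^α * ∫ t in Set.Ioo (-1:ℝ) 1,
            Wc t * ((Qann (u n) k).eval t * (Qann (u n) k).eval t)) := by
          rw [← mul_assoc, inv_mul_cancel₀ hγα.ne', one_mul]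
    _ ≤ ((So^2:ℝ)^α)⁻¹ * 1 := mul_le_mul_of_nonneg_left hle (inv_nonneg.mpr hγα.le)
    _ = ((So^2:ℝ)^α)⁻¹ := mul_one _
  -- uniform coefficient bound
  set B : ℝ := Real.sqrt (((So^2:ℝ)^α)⁻¹ / m₀) with hBdef
  have hB0 : 0 ≤ B := Real.sqrt_nonneg _
  have hBsq : B ^ 2 = ((So^2:ℝ)^α)⁻¹ / m₀ := Real.sq_sqrt (by positivity)
  have hvball : ∀ n, v n ∈ Metric.closedBall (0 : Fin (k+1) → ℝ) B := by
    intro n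
    have h1 : m₀ * ∑ i : Fin (k+1), v n i ^ 2 ≤ ((So^2:ℝ)^α)⁻¹ := by
      refine (hquad (v n)).trans ?_
      rw [show (fun t => Wc t * ((∑ i : Fin (k+1), v n i * t ^ (i:ℕ))
            * (∑ i : Fin (k+1), v n i * t ^ (i:ℕ))))
          = (fun t => Wc t * ((Qann (u n) k).eval t * (Qann (u n) k).eval t))
        from funext fun t => by rw [hqeval n t]]
      exact hWcQbound n
    have h2 : ∑ i : Fin (k+1), v n i ^ 2 ≤ B ^ 2 := by
      rw [hBsq, le_div_iff₀ hm₀]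
      linarith [h1]
    rw [Metric.mem_closedBall, dist_zero_right]
    rw [pi_norm_le_iff_of_nonneg hB0]
    intro i
    have h3 : v n i ^ 2 ≤ B ^ 2 := by
      refine le_trans ?_ h2
      exact Finset.single_le_sum (f := fun i => v n i ^ 2) (fun j _ => sq_nonneg _)
        (Finset.mem_univ i)
    rw [Real.norm_eq_abs]
    nlinarith [sq_abs (v n i), abs_nonneg (v n i)]
  obtain ⟨w, _, φ, hφmono, hconv⟩ := tendsto_subseq_of_bounded
    (Metric.isBounded_closedBall (x := (0 : Fin (k+1) → ℝ)) (r := B)) hvball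
  have hwconv : ∀ i, Tendsto (fun n => v (φ n) i) atTop (nhds (w i)) := by
    intro i
    exact (tendsto_pi_nhds.mp hconv) i
  -- the limit polynomial
  set Qs : Polynomial ℝ := ∑ i : Fin (k+1), Polynomial.C (w i) * Polynomial.X ^ (i:ℕ) with hQs
  have hQsdeg : Qs.degree ≤ ((k:ℕ) : WithBot ℕ) := vecPoly_degree w
  have hQscoeff : ∀ j : Fin (k+1), Qs.coeff (j:ℕ) = w j := fun j => vecPoly_coeff w j
  have huφ : Tendsto (fun n => u (φ n)) atTop (nhds 0) := hu0.comp hφmono.tendsto_atTop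
  have hevconv : ∀ t : ℝ, Tendsto (fun n => (Qann (u (φ n)) k).eval t) atTop
      (nhds (Qs.eval t)) := by
    intro t
    rw [show (fun n => (Qann (u (φ n)) k).eval t)
        = (fun n => ∑ i : Fin (k+1), v (φ n) i * t ^ (i:ℕ))
      from funext fun n => hqeval (φ n) t]
    rw [vecPoly_eval w t]
    exact tendsto_finset_sum _ fun i _ => (hwconv i).mul_const _
  -- limits of the integrals (dominated convergence)
  have hWAconv : ∀ t ∈ Set.Ioo (-1:ℝ) 1,
      Tendsto (fun n => WA (u (φ n)) t) atTop (nhds (WA 0 t)) := by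
    intro t ht
    rw [hWA]
    simp only
    apply Tendsto.const_mul
    have hbase : Tendsto (fun n => (u (φ n))^2*(1-t)+So^2*(1+t)) atTop
        (nhds ((0:ℝ)^2*(1-t)+So^2*(1+t))) := by
      exact (((huφ.pow 2).mul_const (1-t)).add_const (So^2*(1+t)))
    exact ((Real.continuousAt_rpow_const _ α (Or.inr hα)).tendsto.comp hbase)
  have hQb : ∀ n, ∀ t ∈ Set.Icc (-1:ℝ) 1, |(Qann (u n) k).eval t| ≤ (k+1 : ℝ) * B := by
      intro n t ht
      rw [hqeval n t]
      calc |∑ i : Fin (k+1), v n i * t ^ (i:ℕ)| ≤ ∑ i : Fin (k+1), |v n i * t ^ (i:ℕ)| :=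
          Finset.abs_sum_le_sum_abs _ _
      _ ≤ ∑ _i : Fin (k+1), B := by
          apply Finset.sum_le_sum
          intro i _
          rw [abs_mul]
          have h1 : |v n i| ≤ B := by
            have := hvball n
            rw [Metric.mem_closedBall, dist_zero_right] at this
            calc |v n i| = ‖v n i‖ := rfl
            _ ≤ ‖v n‖ := norm_le_pi_norm (v n) i
            _ ≤ B := this
          have h2 : |t ^ (i:ℕ)| ≤ 1 := by
            rw [abs_pow]
            apply pow_le_one₀ (abs_nonneg _)
            rw [abs_le]; exact ⟨ht.1, ht.2⟩
          calc |v n i| * |t ^ (i:ℕ)| ≤ B * 1 :=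
            mul_le_mul h1 h2 (abs_nonneg _) hB0
          _ = B := mul_one _
      _ = (k+1 : ℝ) * B := by rw [Finset.sum_const, Finset.card_univ, Fintype.card_fin]; push_cast; ring
  have domconv : ∀ (f : ℕ → ℝ → ℝ) (g : ℝ → ℝ) (Cf : ℝ),
      (∀ n, Continuous (f n)) → Continuous g →
      (∀ n, ∀ t ∈ Set.Icc (-1:ℝ) 1, |f n t| ≤ Cf) →
      (∀ t, Tendsto (fun n => f n t) atTop (nhds (g t))) →
      Tendsto (fun n => ∫ t in Set.Ioo (-1:ℝ) 1, WA (u (φ n)) t * f n t) atTop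
        (nhds (∫ t in Set.Ioo (-1:ℝ) 1, WA 0 t * g t)) := by
    intro f g Cf hfc hgc hfb hfl
    apply MeasureTheory.tendsto_integral_of_dominated_convergence
      (bound := fun _ => Cb * Cf)
    · intro n
      apply ContinuousOn.aestronglyMeasurable _ measurableSet_Ioo
      exact (annW_contOn hpos hSo (u (φ n))).mul (hfc n).continuousOn
    · exact integrableOn_const measure_Ioo_lt_top.ne
    · intro n
      refine (ae_restrict_iff' measurableSet_Ioo).2 (Filter.Eventually.of_forall fun t ht => ?_)
      have ht' := Set.Ioo_subset_Icc_self ht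
      have h1 : |WA (u (φ n)) t| ≤ Cb := hCb (u (φ n)) (hsq _ (hu (φ n))) t ht
      have h2 : |f n t| ≤ Cf := hfb n t ht'
      calc ‖WA (u (φ n)) t * f n t‖ = |WA (u (φ n)) t| * |f n t| := abs_mul _ _
      _ ≤ Cb * Cf := mul_le_mul h1 h2 (abs_nonneg _) ((abs_nonneg _).trans h1)
    · refine (ae_restrict_iff' measurableSet_Ioo).2 (Filter.Eventually.of_forall fun t ht => ?_)
      exact (hWAconv t ht).mul (hfl t)
  have hkB : (0:ℝ) ≤ (k+1:ℝ) * B := by positivity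
  -- the norm of the limit polynomial
  have hQsnorm : (∫ t in Set.Ioo (-1:ℝ) 1, WA 0 t * (Qs.eval t * Qs.eval t)) = 1 := by
    have h1 := domconv (fun n t => (Qann (u (φ n)) k).eval t * (Qann (u (φ n)) k).eval t)
      (fun t => Qs.eval t * Qs.eval t) (((k+1:ℝ)*B) * ((k+1:ℝ)*B))
      (fun n => ((Qann (u (φ n)) k).continuous_aeval).mul ((Qann (u (φ n)) k).continuous_aeval))
      ((Qs.continuous_aeval).mul (Qs.continuous_aeval))
      (fun n t ht => by
        rw [abs_mul]
        exact mul_le_mul (hQb (φ n) t ht) (hQb (φ n) t ht) (abs_nonneg _) hkB)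
      (fun t => (hevconv t).mul (hevconv t))
    have h2 : (fun n => ∫ t in Set.Ioo (-1:ℝ) 1,
        WA (u (φ n)) t * ((Qann (u (φ n)) k).eval t * (Qann (u (φ n)) k).eval t))
        = fun _ => (1:ℝ) := funext fun n => by simpa using hQannorth' (φ n) k k
    rw [h2] at h1
    have h3 := tendsto_nhds_unique h1 tendsto_const_nhds
    simpa using h3
  -- orthogonality of the limit polynomial to the monomials of degree < k
  have hQsorthX : ∀ i : ℕ, i < k → (∫ t in Set.Ioo (-1:ℝ) 1,
      WA 0 t * ((Polynomial.X ^ i : Polynomial ℝ).eval t * Qs.eval t)) = 0 := by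
    intro i hik
    have hXb : ∀ t ∈ Set.Icc (-1:ℝ) 1, |(Polynomial.X ^ i : Polynomial ℝ).eval t| ≤ 1 := by
      intro t ht
      rw [Polynomial.eval_pow, Polynomial.eval_X, abs_pow]
      apply pow_le_one₀ (abs_nonneg _)
      rw [abs_le]; exact ⟨ht.1, ht.2⟩
    have hzero : ∀ n, (∫ t in Set.Ioo (-1:ℝ) 1,
        WA (u (φ n)) t * ((Polynomial.X ^ i : Polynomial ℝ).eval t
          * (Qann (u (φ n)) k).eval t)) = 0 := by
      intro n
      refine aux_ortho (WA (u (φ n))) (hWAint _ (hsq _ (hu (φ n)))) (Qann (u (φ n)))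
        (fun j => hQanndeg _ (hu (φ n)) j) (Qann (u (φ n)) k) k
        (fun j hj => by
          have := hQannorth' (φ n) j k
          rwa [if_neg (Nat.ne_of_lt hj)] at this) _ ?_
      rw [Polynomial.degree_X_pow]
      exact_mod_cast hik
    have h1 := domconv (fun n t => (Polynomial.X ^ i : Polynomial ℝ).eval t
        * (Qann (u (φ n)) k).eval t)
      (fun t => (Polynomial.X ^ i : Polynomial ℝ).eval t * Qs.eval t) (1 * ((k+1:ℝ)*B))
      (fun n => ((Polynomial.X ^ i : Polynomial ℝ).continuous_aeval).mul
        ((Qann (u (φ n)) k).continuous_aeval))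
      (((Polynomial.X ^ i : Polynomial ℝ).continuous_aeval).mul (Qs.continuous_aeval))
      (fun n t ht => by
        rw [abs_mul]
        exact mul_le_mul (hXb t ht) (hQb (φ n) t ht) (abs_nonneg _) zero_le_one)
      (fun t => tendsto_const_nhds.mul (hevconv t))
    rw [funext hzero] at h1
    have h3 := tendsto_nhds_unique h1 tendsto_const_nhds
    simpa using h3
  -- nonnegative leading coefficient
  have hQslead : 0 ≤ Qs.coeff k := by
    have h1 : Qs.coeff k = w ⟨k, Nat.lt_succ_self k⟩ := hQscoeff ⟨k, Nat.lt_succ_self k⟩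
    rw [h1]
    refine ge_of_tendsto' (hwconv ⟨k, Nat.lt_succ_self k⟩) fun n => ?_
    show 0 ≤ (Qann (u (φ n)) k).coeff k
    have h2 : (Qann (u (φ n)) k).coeff k = (Qann (u (φ n)) k).leadingCoeff := by
      rw [Polynomial.leadingCoeff, hQnat]
    rw [h2]
    exact (hQannlead _ (hu (φ n)) k).le
  -- relation between WA 0 and Wc integrals
  have hrel : ∀ p q : Polynomial ℝ, (∫ t in Set.Ioo (-1:ℝ) 1, WA 0 t * (p.eval t * q.eval t))
      = (So^2:ℝ)^α * ∫ t in Set.Ioo (-1:ℝ) 1, Wc t * (p.eval t * q.eval t) := by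
    intro p q
    rw [← MeasureTheory.integral_const_mul]
    apply setIntegral_congr_fun measurableSet_Ioo
    intro t ht
    have h1 := annW_zero_eq (h := h) (So := So) (α := α) (e := e) t (Set.Ioo_subset_Icc_self ht)
    show WA 0 t * (p.eval t * q.eval t) = (So^2:ℝ)^α * (Wc t * (p.eval t * q.eval t))
    rw [hWA, hWc]
    simp only
    rw [h1]
    ring
  -- the cylinder orthonormality in canonical form
  have hQcylorth' : ∀ j j', (∫ t in Set.Ioo (-1:ℝ) 1,
      Wc t * ((Qcyl j).eval t * (Qcyl j').eval t)) = if j = j' then (1:ℝ) else 0 := by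
    intro j j'
    rw [show (fun t => Wc t * ((Qcyl j).eval t * (Qcyl j').eval t))
        = (fun t => (1 + t) ^ α * h.eval t ^ e * (Qcyl j).eval t * (Qcyl j').eval t)
      from funext fun t => by rw [hWc]; ring]
    exact hQcylorth j j'
  have hQknorm : (∫ t in Set.Ioo (-1:ℝ) 1, Wc t * ((Qcyl k).eval t * (Qcyl k).eval t)) = 1 := by
    simpa using hQcylorth' k k
  have hQkorth : ∀ p : Polynomial ℝ, p.degree < (k:ℕ) →
      (∫ t in Set.Ioo (-1:ℝ) 1, Wc t * (p.eval t * (Qcyl k).eval t)) = 0 :=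
    aux_ortho Wc hWcint Qcyl hQcyldeg (Qcyl k) k
      (fun j hj => by
        have := hQcylorth' j k
        rwa [if_neg (Nat.ne_of_lt hj)] at this)
  -- assemble the uniqueness argument
  have hQsorth : ∀ p : Polynomial ℝ, p.degree < (k:ℕ) →
      (∫ t in Set.Ioo (-1:ℝ) 1, WA 0 t * (p.eval t * Qs.eval t)) = 0 :=
    aux_ortho (WA 0) (hWAint 0 (by nlinarith [sq_nonneg So])) (fun j => Polynomial.X ^ j)
      (fun j => Polynomial.degree_X_pow j) Qs k (fun j hj => hQsorthX j hj)
  have hQsWc : ∀ p : Polynomial ℝ, p.degree < (k:ℕ) →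
      (∫ t in Set.Ioo (-1:ℝ) 1, Wc t * (p.eval t * Qs.eval t)) = 0 := by
    intro p hp
    have h1 := hQsorth p hp
    rw [hrel p Qs] at h1
    exact (mul_eq_zero.mp h1).resolve_left hγα.ne'
  set R : Polynomial ℝ := Polynomial.C γ * Qs with hRdef
  have hReval : ∀ t : ℝ, R.eval t = γ * Qs.eval t := fun t => by
    rw [hRdef, Polynomial.eval_mul, Polynomial.eval_C]
  have hRQ : R = Qcyl k := by
    apply aux_unique Wc hWcint hpzc k (Qcyl k) (hQcyldeg k) (hQcyllead k) hQknorm hQkorth R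
    · refine (Polynomial.degree_mul_le _ _).trans ?_
      calc (Polynomial.C γ).degree + Qs.degree ≤ 0 + ((k:ℕ) : WithBot ℕ) :=
        add_le_add Polynomial.degree_C_le hQsdeg
      _ = ((k:ℕ) : WithBot ℕ) := zero_add _
    · intro p hp
      rw [show (fun t => Wc t * (p.eval t * R.eval t))
          = (fun t => γ * (Wc t * (p.eval t * Qs.eval t))) from funext fun t => by
        rw [hReval]; ring]
      rw [MeasureTheory.integral_const_mul, hQsWc p hp]
      ring
    · rw [show (fun t => Wc t * (R.eval t * R.eval t))
          = (fun t => (γ * γ) * (Wc t * (Qs.eval t * Qs.eval t))) from funext fun t => by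
        rw [hReval]; ring]
      rw [MeasureTheory.integral_const_mul]
      have h2 : (∫ t in Set.Ioo (-1:ℝ) 1, Wc t * (Qs.eval t * Qs.eval t))
          = ((So^2:ℝ)^α)⁻¹ := by
        have h3 := hQsnorm
        rw [hrel Qs Qs] at h3
        field_simp at h3 ⊢
        linarith [h3]
      rw [h2, hγsq]
      field_simp
    · rw [hRdef, Polynomial.coeff_C_mul]
      exact mul_nonneg hγ.le hQslead
  have hQseval : ∀ t : ℝ, Qs.eval t = γ⁻¹ * (Qcyl k).eval t := by
    intro t
    have h1 : γ * Qs.eval t = (Qcyl k).eval t := by rw [← hReval, hRQ]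
    field_simp [hγ.ne'] at h1 ⊢
    linarith [h1]
  exact ⟨φ, fun t => by
    have h1 := hevconv t
    rwa [hQseval t] at h1⟩
end SEQ

/-- For `α = 0`, the annulus gyroscopic basis functions converge pointwise to the cylinder
gyroscopic basis functions as the inner radius `S_i` shrinks to zero. -/
theorem statement13
    (h : Polynomial ℝ) (hpos : ∀ t ∈ Set.Icc (-1 : ℝ) 1, 0 < h.eval t)
    (So : ℝ) (hSo : 0 < So)
    (m : ℤ) (σ : ℤ) (hσ : σ = -1 ∨ σ = 0 ∨ σ = 1) (hm : 0 ≤ |m| + σ)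
    (l k : ℕ)
    (P : ℕ → Polynomial ℝ)
    (hPdeg : ∀ j, (P j).degree = j) (hPlead : ∀ j, 0 < (P j).leadingCoeff)
    (hPorth : ∀ j j', (∫ η in Set.Ioo (-1 : ℝ) 1, (P j).eval η * (P j').eval η)
      = if j = j' then (1 : ℝ) else 0)
    (Qcyl : ℕ → Polynomial ℝ)
    (hQcyldeg : ∀ j, (Qcyl j).degree = j) (hQcyllead : ∀ j, 0 < (Qcyl j).leadingCoeff)
    (hQcylorth : ∀ j j', (∫ t in Set.Ioo (-1 : ℝ) 1,
        (1 + t) ^ ((|m| + σ : ℤ) : ℝ) * h.eval t ^ (2 * (l : ℝ) + 1)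
          * (Qcyl j).eval t * (Qcyl j').eval t)
      = if j = j' then (1 : ℝ) else 0)
    (Qann : ℝ → ℕ → Polynomial ℝ)
    (hQanndeg : ∀ Si ∈ Set.Ioo (0 : ℝ) So, ∀ j, (Qann Si j).degree = j)
    (hQannlead : ∀ Si ∈ Set.Ioo (0 : ℝ) So, ∀ j, 0 < (Qann Si j).leadingCoeff)
    (hQannorth : ∀ Si ∈ Set.Ioo (0 : ℝ) So, ∀ j j', (∫ t in Set.Ioo (-1 : ℝ) 1,
        h.eval t ^ (2 * (l : ℝ) + 1)
          * (Si ^ 2 * (1 - t) + So ^ 2 * (1 + t)) ^ ((|m| + σ : ℤ) : ℝ)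
          * (Qann Si j).eval t * (Qann Si j').eval t)
      = if j = j' then (1 : ℝ) else 0) :
    ∀ t ∈ Set.Icc (-1 : ℝ) 1, ∀ φ : ℝ, ∀ η ∈ Set.Icc (-1 : ℝ) 1,
      Tendsto
        (fun Si : ℝ =>
          Complex.exp (Complex.I * m * φ) *
            (((Si ^ 2 * (1 - t) + So ^ 2 * (1 + t)) ^ (((|m| + σ : ℤ) : ℝ) / 2)
              * h.eval t ^ l * (P l).eval η * (Qann Si k).eval t : ℝ) : ℂ))
        (nhdsWithin 0 (Set.Ioi 0))
        (nhds (Complex.exp (Complex.I * m * φ) *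
          (((1 + t) ^ (((|m| + σ : ℤ) : ℝ) / 2)
            * h.eval t ^ l * (P l).eval η * (Qcyl k).eval t : ℝ) : ℂ))) := by
  intro t ht φ η hη
  have hα : (0:ℝ) ≤ ((|m| + σ : ℤ) : ℝ) := by exact_mod_cast hm
  have he : (0:ℝ) ≤ 2 * (l : ℝ) + 1 := by positivity
  set α : ℝ := ((|m| + σ : ℤ) : ℝ) with hαdef
  set γ : ℝ := (So ^ 2) ^ (α / 2 : ℝ) with hγdef
  have hγpos : 0 < γ := Real.rpow_pos_of_pos (pow_pos hSo 2) _
  -- convergence of the orthogonal polynomial factor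
  have hB : Tendsto (fun Si : ℝ => (Qann Si k).eval t) (nhdsWithin 0 (Set.Ioi 0))
      (nhds (γ⁻¹ * (Qcyl k).eval t)) := by
    apply tendsto_of_subseq_tendsto
    intro ns hns
    have hmem : ∀ᶠ n in atTop, ns n ∈ Set.Ioo (0:ℝ) So :=
      hns.eventually (Ioo_mem_nhdsGT_of_mem ⟨le_refl 0, hSo⟩)
    obtain ⟨N, hN⟩ := eventually_atTop.mp hmem
    set u : ℕ → ℝ := fun n => ns (n + N) with hu_def
    have hu : ∀ n, u n ∈ Set.Ioo (0:ℝ) So := fun n => hN _ (Nat.le_add_left N n)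
    have hu0 : Tendsto u atTop (nhds 0) :=
      (hns.mono_right nhdsWithin_le_nhds).comp (tendsto_add_atTop_nat N)
    obtain ⟨ψ, hψ⟩ := aux_seq hpos hSo hα he k Qcyl hQcyldeg hQcyllead hQcylorth
      Qann hQanndeg hQannlead hQannorth u hu hu0
    exact ⟨fun n => ψ n + N, hψ t⟩
  -- convergence of the weight factor
  have hbase : Tendsto (fun Si : ℝ => Si ^ 2 * (1 - t) + So ^ 2 * (1 + t))
      (nhdsWithin 0 (Set.Ioi 0)) (nhds ((0:ℝ) ^ 2 * (1 - t) + So ^ 2 * (1 + t))) := by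
    apply Tendsto.mono_left _ nhdsWithin_le_nhds
    exact (((continuous_id.pow 2).mul continuous_const).add continuous_const).tendsto 0
  have hA : Tendsto (fun Si : ℝ => (Si ^ 2 * (1 - t) + So ^ 2 * (1 + t)) ^ (α / 2 : ℝ))
      (nhdsWithin 0 (Set.Ioi 0)) (nhds (γ * (1 + t) ^ (α / 2 : ℝ))) := by
    have h1 : Tendsto (fun Si : ℝ => (Si ^ 2 * (1 - t) + So ^ 2 * (1 + t)) ^ (α / 2 : ℝ))
        (nhdsWithin 0 (Set.Ioi 0))
        (nhds (((0:ℝ) ^ 2 * (1 - t) + So ^ 2 * (1 + t)) ^ (α / 2 : ℝ))) :=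
      (Real.continuousAt_rpow_const _ _ (Or.inr (by positivity))).tendsto.comp hbase
    have h2 : ((0:ℝ) ^ 2 * (1 - t) + So ^ 2 * (1 + t)) ^ (α / 2 : ℝ)
        = γ * (1 + t) ^ (α / 2 : ℝ) := by
      rw [show (0:ℝ) ^ 2 * (1 - t) + So ^ 2 * (1 + t) = So ^ 2 * (1 + t) by ring]
      rw [Real.mul_rpow (sq_nonneg So) (by linarith [ht.1]), hγdef]
    rwa [h2] at h1
  -- combine
  have hreal : Tendsto (fun Si : ℝ => (Si ^ 2 * (1 - t) + So ^ 2 * (1 + t)) ^ (α / 2 : ℝ)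
      * h.eval t ^ l * (P l).eval η * (Qann Si k).eval t)
      (nhdsWithin 0 (Set.Ioi 0))
      (nhds ((1 + t) ^ (α / 2 : ℝ) * h.eval t ^ l * (P l).eval η * (Qcyl k).eval t)) := by
    have h3 := ((hA.mul_const (h.eval t ^ l)).mul_const ((P l).eval η)).mul hB
    have h4 : γ * (1 + t) ^ (α / 2 : ℝ) * h.eval t ^ l * (P l).eval η
        * (γ⁻¹ * (Qcyl k).eval t)
        = (1 + t) ^ (α / 2 : ℝ) * h.eval t ^ l * (P l).eval η * (Qcyl k).eval t := by
      field_simp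
    rwa [h4] at h3
  have hcplx : Tendsto (fun Si : ℝ => (((Si ^ 2 * (1 - t) + So ^ 2 * (1 + t)) ^ (α / 2 : ℝ)
      * h.eval t ^ l * (P l).eval η * (Qann Si k).eval t : ℝ) : ℂ))
      (nhdsWithin 0 (Set.Ioi 0))
      (nhds (((1 + t) ^ (α / 2 : ℝ) * h.eval t ^ l * (P l).eval η
        * (Qcyl k).eval t : ℝ) : ℂ)) :=
    (Complex.continuous_ofReal.tendsto _).comp hreal
  exact hcplx.const_mul _
end

section
/- Each cylinder gyroscopic basis function with nonnegative azimuthal wavenumber and spin weight zero is a Cartesian polynomial: fix S_o > 0 and define t(s) = 2(s/S_o)² − 1 and h(s) = h̃(t(s)). Then for every m ∈ ℕ and l, k ∈ ℕ there exists a polynomial p ∈ ℂ[X,Y,Z] such that for all s ∈ [0,S_o], φ ∈ ℝ, and η ∈ [−1,1]: Φ_{m,l,k}^{(α,0)}(t(s), φ, η) = p(s cos φ, s sin φ, η·h(s)). -/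
open MeasureTheory Polynomial

/-- Each cylinder gyroscopic basis function with nonnegative azimuthal wavenumber `m` and
spin weight `σ = 0` is a Cartesian polynomial:  `Φ_{m,l,k}^{(α,0)}(t(s),φ,η)` equals a
polynomial in `(x, y, z) = (s cos φ, s sin φ, η h(s))`, where `t(s) = 2(s/S_o)² - 1` and
`h(s) = h̃(t(s))`. -/
theorem statement14
    (h : Polynomial ℝ) (hpos : ∀ t ∈ Set.Icc (-1 : ℝ) 1, 0 < h.eval t)
    (α : ℝ) (hα : -1 < α)
    (P : ℕ → Polynomial ℝ)
    (hPdeg : ∀ l, (P l).degree = l) (hPlead : ∀ l, 0 < (P l).leadingCoeff)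
    (hPorth : ∀ l l', (∫ η in Set.Ioo (-1 : ℝ) 1,
        (1 - η ^ 2) ^ α * (P l).eval η * (P l').eval η)
      = if l = l' then (1 : ℝ) else 0)
    (Q : ℕ → ℕ → ℕ → Polynomial ℝ)
    (hQdeg : ∀ m l k, (Q m l k).degree = k) (hQlead : ∀ m l k, 0 < (Q m l k).leadingCoeff)
    (hQorth : ∀ m l j k : ℕ,
      (∫ t in Set.Ioo (-1 : ℝ) 1,
        (1 - t) ^ α * (1 + t) ^ (m : ℝ) * h.eval t ^ (2 * (l : ℝ) + 2 * α + 1)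
          * (Q m l j).eval t * (Q m l k).eval t)
      = if j = k then (1 : ℝ) else 0)
    (So : ℝ) (hSo : 0 < So) :
    ∀ m l k : ℕ, ∃ pc : MvPolynomial (Fin 3) ℂ,
      ∀ s ∈ Set.Icc (0 : ℝ) So, ∀ φ : ℝ, ∀ η ∈ Set.Icc (-1 : ℝ) 1,
        Complex.exp (Complex.I * m * φ) *
          (((1 + (2 * (s / So) ^ 2 - 1)) ^ ((m : ℝ) / 2)
            * h.eval (2 * (s / So) ^ 2 - 1) ^ l
            * (P l).eval η * (Q m l k).eval (2 * (s / So) ^ 2 - 1) : ℝ) : ℂ)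
        = MvPolynomial.eval
            ![((s * Real.cos φ : ℝ) : ℂ), ((s * Real.sin φ : ℝ) : ℂ),
              ((η * h.eval (2 * (s / So) ^ 2 - 1) : ℝ) : ℂ)] pc := by
  intro m l k
  classical
  set Tp : MvPolynomial (Fin 3) ℂ :=
    MvPolynomial.C ((2 : ℂ) / (So : ℂ) ^ 2) *
      ((MvPolynomial.X 0) ^ 2 + (MvPolynomial.X 1) ^ 2) - 1 with hTp
  refine ⟨MvPolynomial.C ((Real.sqrt 2 / So : ℝ) : ℂ) ^ m
      * (MvPolynomial.X 0 + MvPolynomial.C Complex.I * MvPolynomial.X 1) ^ m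
      * Polynomial.aeval Tp ((Q m l k).map (algebraMap ℝ ℂ))
      * ∑ j ∈ Finset.range (l + 1),
          MvPolynomial.C (((P l).coeff j : ℝ) : ℂ) *
            (Polynomial.aeval Tp (h.map (algebraMap ℝ ℂ))) ^ (l - j)
            * (MvPolynomial.X 2) ^ j, ?_⟩
  intro s hs φ η hη
  have hSo' : So ≠ 0 := ne_of_gt hSo
  have hSoC : (So : ℂ) ≠ 0 := by exact_mod_cast hSo'
  set t : ℝ := 2 * (s / So) ^ 2 - 1 with ht
  set v : Fin 3 → ℂ := ![((s * Real.cos φ : ℝ) : ℂ), ((s * Real.sin φ : ℝ) : ℂ),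
      ((η * h.eval t : ℝ) : ℂ)] with hv
  have hvT : MvPolynomial.eval v Tp = (t : ℂ) := by
    simp only [hTp, hv, map_sub, map_mul, map_add, map_pow, map_one,
      MvPolynomial.eval_C, MvPolynomial.eval_X, Matrix.cons_val_zero, Matrix.cons_val_one,
      Matrix.head_cons]
    have hr : (s * Real.cos φ) ^ 2 + (s * Real.sin φ) ^ 2 = s ^ 2 := by
      have h1 := Real.sin_sq_add_cos_sq φ
      nlinarith [h1]
    have hC : ((s * Real.cos φ : ℝ) : ℂ) ^ 2 + ((s * Real.sin φ : ℝ) : ℂ) ^ 2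
        = ((s ^ 2 : ℝ) : ℂ) := by
      rw [← Complex.ofReal_pow, ← Complex.ofReal_pow, ← Complex.ofReal_add, hr]
    rw [hC, ht]
    push_cast
    field_simp
  have key : ∀ q : Polynomial ℝ,
      MvPolynomial.eval v (Polynomial.aeval Tp (q.map (algebraMap ℝ ℂ)))
        = ((q.eval t : ℝ) : ℂ) := by
    intro q
    rw [Polynomial.aeval_def, Polynomial.hom_eval₂, hvT]
    have hcomp : (MvPolynomial.eval v).comp (algebraMap ℂ (MvPolynomial (Fin 3) ℂ))
        = RingHom.id ℂ := by
      ext x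
      simp [MvPolynomial.algebraMap_eq]
    rw [hcomp]
    have h1 : (t : ℂ) = algebraMap ℝ ℂ t := rfl
    rw [show (Polynomial.eval₂ (RingHom.id ℂ) (t : ℂ) (q.map (algebraMap ℝ ℂ)))
        = Polynomial.eval ((t : ℝ) : ℂ) (q.map (algebraMap ℝ ℂ)) from rfl,
      Polynomial.eval_map, h1, Polynomial.eval₂_at_apply]
    rfl
  -- evaluate RHS
  rw [map_mul, map_mul, map_mul, map_pow, map_pow, MvPolynomial.eval_C, key]
  have hxy : MvPolynomial.eval v (MvPolynomial.X 0 + MvPolynomial.C Complex.I * MvPolynomial.X 1)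
      = (s : ℂ) * Complex.exp (φ * Complex.I) := by
    simp only [map_add, map_mul, MvPolynomial.eval_C, MvPolynomial.eval_X, hv,
      Matrix.cons_val_zero, Matrix.cons_val_one, Matrix.head_cons]
    rw [Complex.exp_mul_I, ← Complex.ofReal_cos, ← Complex.ofReal_sin]
    push_cast
    ring
  rw [hxy]
  -- the sum
  have hdeg : (P l).natDegree = l := Polynomial.natDegree_eq_of_degree_eq_some (hPdeg l)
  have hsumR : ∑ j ∈ Finset.range (l + 1),
      (P l).coeff j * (h.eval t ^ (l - j) * (η * h.eval t) ^ j)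
      = h.eval t ^ l * (P l).eval η := by
    have hev := Polynomial.eval_eq_sum_range (p := P l) η
    rw [hdeg] at hev
    rw [hev, Finset.mul_sum]
    refine Finset.sum_congr rfl fun j hj => ?_
    have hjle : j ≤ l := Nat.lt_succ_iff.mp (Finset.mem_range.mp hj)
    have hpow : h.eval t ^ (l - j) * (η * h.eval t) ^ j = h.eval t ^ l * η ^ j := by
      rw [mul_pow, show h.eval t ^ (l - j) * (η ^ j * h.eval t ^ j)
          = h.eval t ^ (l - j) * h.eval t ^ j * η ^ j from by ring,
        ← pow_add, Nat.sub_add_cancel hjle]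
    rw [hpow]
    ring
  have hsum : MvPolynomial.eval v (∑ j ∈ Finset.range (l + 1),
      MvPolynomial.C (((P l).coeff j : ℝ) : ℂ) *
        (Polynomial.aeval Tp (h.map (algebraMap ℝ ℂ))) ^ (l - j)
        * (MvPolynomial.X 2) ^ j)
      = ((h.eval t ^ l * (P l).eval η : ℝ) : ℂ) := by
    rw [map_sum]
    have hterm : ∀ j ∈ Finset.range (l + 1),
        MvPolynomial.eval v (MvPolynomial.C (((P l).coeff j : ℝ) : ℂ) *
          (Polynomial.aeval Tp (h.map (algebraMap ℝ ℂ))) ^ (l - j)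
          * (MvPolynomial.X 2) ^ j)
        = (((P l).coeff j * (h.eval t ^ (l - j) * (η * h.eval t) ^ j) : ℝ) : ℂ) := by
      intro j _
      rw [map_mul, map_mul, map_pow, map_pow, MvPolynomial.eval_C, key,
        MvPolynomial.eval_X, show v 2 = ((η * h.eval t : ℝ) : ℂ) from rfl]
      push_cast
      ring
    rw [Finset.sum_congr rfl hterm, ← Complex.ofReal_sum, hsumR]
  rw [hsum]
  -- scalar identity
  have hs0 : 0 ≤ s := hs.1
  have ha : (0:ℝ) ≤ Real.sqrt 2 * (s / So) := by positivity
  have hrp : (1 + t) ^ ((m : ℝ) / 2) = (Real.sqrt 2 * (s / So)) ^ m := by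
    have h1t : 1 + t = (Real.sqrt 2 * (s / So)) ^ 2 := by
      rw [mul_pow, Real.sq_sqrt (by norm_num : (0:ℝ) ≤ 2)]
      rw [ht]; ring
    rw [h1t, ← Real.rpow_natCast (Real.sqrt 2 * (s / So)) 2, ← Real.rpow_mul ha,
      show (((2:ℕ):ℝ)) * ((m:ℝ)/2) = (m:ℝ) by push_cast; ring,
      Real.rpow_natCast]
  rw [hrp]
  have hexp : Complex.exp ((φ:ℂ) * Complex.I) ^ m
      = Complex.exp (Complex.I * (m:ℂ) * (φ:ℂ)) := by
    rw [← Complex.exp_nat_mul]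
    congr 1
    ring
  rw [mul_pow (s:ℂ) (Complex.exp ((φ:ℂ) * Complex.I)) m, hexp]
  push_cast
  ring
end
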